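/- arXiv:2311.18354 — 4 statements merged into one kernel-verified Lean document; each statement's English description precedes it below -/
import Mathlib

section
/- Let Λ be an O_F-lattice in a symplectic F-space (V, φ), and let Stab(Λ) denote the subgroup of GSp_{F₀}(V, φ)(F₀) consisting of elements g with gΛ = Λ. Then the similitude character c maps Stab(Λ) onto O_{F₀}^×: for every t ∈ O_{F₀}^× there exists an F-linear automorphism g of V with gΛ = Λ and φ(gx, gy) = t·φ(x, y) for all x, y ∈ V. -/
lemma my_dvd_total {O F : Type} [CommRing O] [IsDomain O] [ValuationRing O]
    [Field F] [Algebra O F] [IsFractionRing O F] (a b : F) :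
    (∃ r : O, b = algebraMap O F r * a) ∨ (∃ r : O, a = algebraMap O F r * b) := by
  rcases eq_or_ne a 0 with ha | ha
  · exact Or.inr ⟨0, by simp [ha]⟩
  rcases eq_or_ne b 0 with hb | hb
  · exact Or.inl ⟨0, by simp [hb]⟩
  rcases ValuationRing.isInteger_or_isInteger O (b / a) with ⟨r, hr⟩ | ⟨r, hr⟩
  · exact Or.inl ⟨r, by field_simp at hr; exact hr.symm⟩
  · rw [inv_div] at hr
    exact Or.inr ⟨r, by field_simp at hr; exact hr.symm⟩

lemma my_exists_min {O F : Type} [CommRing O] [IsDomain O] [ValuationRing O]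
    [Field F] [Algebra O F] [IsFractionRing O F] (T : Finset F) (hT : T.Nonempty) :
    ∃ c ∈ T, ∀ d ∈ T, ∃ r : O, d = algebraMap O F r * c := by
  induction hT using Finset.Nonempty.cons_induction with
  | singleton a => exact ⟨a, Finset.mem_singleton_self a, by
      intro d hd; rw [Finset.mem_singleton] at hd; exact ⟨1, by simp [hd]⟩⟩
  | cons a s ha hs IH =>
    obtain ⟨c, hcs, hdvd⟩ := IH
    rcases my_dvd_total (O := O) c a with ⟨r, hr⟩ | ⟨r, hr⟩
    · refine ⟨c, Finset.mem_cons_of_mem hcs, ?_⟩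
      intro d hd
      rcases Finset.mem_cons.mp hd with rfl | hd
      · exact ⟨r, hr⟩
      · exact hdvd d hd
    · refine ⟨a, Finset.mem_cons_self a s, ?_⟩
      intro d hd
      rcases Finset.mem_cons.mp hd with rfl | hd
      · exact ⟨1, by simp⟩
      · obtain ⟨r', hr'⟩ := hdvd d hd
        exact ⟨r' * r, by rw [hr', hr, map_mul]; ring⟩

lemma my_skew {F V : Type} [Field F] [AddCommGroup V] [Module F V]
    (φ : V →ₗ[F] V →ₗ[F] F) (halt : ∀ x : V, φ x x = 0) (x y : V) :
    φ y x = - φ x y := by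
  have h := halt (x + y)
  simp only [map_add, LinearMap.add_apply, halt x, halt y] at h
  linear_combination h

lemma my_key {O F V : Type} [CommRing O] [IsDomain O] [IsDiscreteValuationRing O]
    [Field F] [Algebra O F] [IsFractionRing O F]
    [AddCommGroup V] [Module F V] [Module O V] [IsScalarTower O F V]
    [FiniteDimensional F V]
    (φ : V →ₗ[F] V →ₗ[F] F) (halt : ∀ x : V, φ x x = 0) :
    ∀ (N : ℕ) (Λ : Submodule O V), Λ.FG →
      Module.finrank F (Submodule.span F (Λ : Set V)) ≤ N →
      (∀ x ∈ Submodule.span F (Λ : Set V),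
        (∀ y ∈ Submodule.span F (Λ : Set V), φ x y = 0) → x = 0) →
      ∃ (ι : Type) (e f : ι → V),
        (∀ i, e i ∈ Λ) ∧ (∀ i, f i ∈ Λ) ∧
        (Λ : Set V) ⊆ (Submodule.span O (Set.range e ∪ Set.range f) : Submodule O V) ∧
        (∀ i j, φ (e i) (e j) = 0) ∧ (∀ i j, φ (f i) (f j) = 0) := by
  classical
  intro N
  induction N using Nat.strong_induction_on with
  | _ N IH =>
  intro Λ hfg hrank hnd
  by_cases hiso : ∀ x ∈ Λ, ∀ y ∈ Λ, φ x y = 0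
  · -- Λ is trivial
    refine ⟨Empty, Empty.elim, Empty.elim, fun i => i.elim, fun i => i.elim, ?_,
      fun i => i.elim, fun i => i.elim⟩
    intro z hz
    have hz0 : z = 0 := by
      refine hnd z (Submodule.subset_span hz) ?_
      intro y hy
      induction hy using Submodule.span_induction with
      | mem y hy => exact hiso z hz y hy
      | zero => simp
      | add u v hu hv hu' hv' => simp [hu', hv']
      | smul a u hu hu' => simp [hu']
    rw [hz0]
    exact Submodule.zero_mem _
  · -- non-degenerate step
    obtain ⟨S, hS⟩ := hfg
    have hSmem : ∀ x ∈ S, x ∈ Λ := fun x hx => hS ▸ Submodule.subset_span hx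
    have hSne : S.Nonempty := by
      rcases S.eq_empty_or_nonempty with rfl | h
      · exfalso
        apply hiso
        intro x hx y hy
        rw [← hS] at hx
        simp only [Finset.coe_empty, Submodule.span_empty, Submodule.mem_bot] at hx
        simp [hx]
      · exact h
    set T : Finset F := (S ×ˢ S).image fun p => φ p.1 p.2 with hT
    have hTne : T.Nonempty := (Finset.Nonempty.product hSne hSne).image _
    obtain ⟨c, hcT, hcdvd⟩ := my_exists_min (O := O) T hTne
    -- c = φ e f for some e f ∈ S
    obtain ⟨p, hp, hpc⟩ := Finset.mem_image.mp hcT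
    obtain ⟨hp1, hp2⟩ := Finset.mem_product.mp hp
    set e := p.1
    set f := p.2
    have he : e ∈ Λ := hSmem _ hp1
    have hf : f ∈ Λ := hSmem _ hp2
    have hef : φ e f = c := hpc
    -- divisibility on all of Λ
    have hdiv : ∀ x ∈ Λ, ∀ y ∈ Λ, ∃ r : O, φ x y = algebraMap O F r * c := by
      have hM : ∀ x ∈ Λ, ∀ y ∈ Λ, φ x y ∈ Submodule.span O ({c} : Set F) := by
        intro x hx y hy
        rw [← hS] at hx hy
        induction hx, hy using Submodule.span_induction₂ with
        | mem_mem u v hu hv =>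
          obtain ⟨r, hr⟩ := hcdvd (φ u v)
            (Finset.mem_image.mpr ⟨(u, v), Finset.mem_product.mpr ⟨hu, hv⟩, rfl⟩)
          rw [hr, ← Algebra.smul_def]
          exact Submodule.smul_mem _ r (Submodule.mem_span_singleton_self c)
        | zero_left v hv => simp
        | zero_right u hu => simp
        | add_left u v w hu hv hw h1 h2 => simp [map_add, Submodule.add_mem _ h1 h2]
        | add_right u v w hu hv hw h1 h2 => simp [Submodule.add_mem _ h1 h2]
        | smul_left r u v hu hv h1 =>
          have : φ (r • u) v = r • φ u v := by
            rw [← algebraMap_smul F r u, map_smul, LinearMap.smul_apply, algebraMap_smul]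
          rw [this]
          exact Submodule.smul_mem _ r h1
        | smul_right r u v hu hv h1 =>
          have : φ u (r • v) = r • φ u v := by
            rw [← algebraMap_smul F r v, map_smul, algebraMap_smul]
          rw [this]
          exact Submodule.smul_mem _ r h1
      intro x hx y hy
      obtain ⟨r, hr⟩ := Submodule.mem_span_singleton.mp (hM x hx y hy)
      exact ⟨r, by rw [← hr, Algebra.smul_def]⟩
    have hc0 : c ≠ 0 := by
      intro h0
      apply hiso
      intro x hx y hy
      obtain ⟨r, hr⟩ := hdiv x hx y hy
      rw [hr, h0, mul_zero]
    set Λ' : Submodule O V := Λ ⊓ (Submodule.restrictScalars O (LinearMap.ker (φ e)))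
        ⊓ (Submodule.restrictScalars O (LinearMap.ker (φ.flip f))) with hΛ'def
    have hΛ'le : Λ' ≤ Λ := le_trans inf_le_left inf_le_left
    have hker1 : ∀ w ∈ Λ', φ e w = 0 := by
      intro w hw
      rw [hΛ'def, Submodule.mem_inf, Submodule.mem_inf] at hw
      have h : w ∈ LinearMap.ker (φ e) := hw.1.2
      exact LinearMap.mem_ker.mp h
    have hker2 : ∀ w ∈ Λ', φ w f = 0 := by
      intro w hw
      rw [hΛ'def, Submodule.mem_inf, Submodule.mem_inf] at hw
      have h : w ∈ LinearMap.ker (φ.flip f) := hw.2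
      have := LinearMap.mem_ker.mp h
      rwa [LinearMap.flip_apply] at this
    have hdecomp : ∀ z ∈ Λ, ∃ a b : O, z - a • e - b • f ∈ Λ' := by
      intro z hz
      obtain ⟨b', hb'⟩ := hdiv e he z hz
      obtain ⟨a', ha'⟩ := hdiv z hz f hf
      refine ⟨a', b', ?_⟩
      rw [hΛ'def, Submodule.mem_inf, Submodule.mem_inf]
      refine ⟨⟨?_, ?_⟩, ?_⟩
      · exact Submodule.sub_mem _ (Submodule.sub_mem _ hz (Submodule.smul_mem _ _ he))
          (Submodule.smul_mem _ _ hf)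
      · rw [Submodule.restrictScalars_mem, LinearMap.mem_ker]
        have h1 : φ e (a' • e) = 0 := by
          rw [← algebraMap_smul F a' e, map_smul, halt e, smul_zero]
        have h2 : φ e (b' • f) = algebraMap O F b' * c := by
          rw [← algebraMap_smul F b' f, map_smul, hef, smul_eq_mul]
        rw [map_sub, map_sub, h1, h2, hb']
        ring
      · rw [Submodule.restrictScalars_mem, LinearMap.mem_ker, LinearMap.flip_apply]
        have h1 : φ (a' • e) f = algebraMap O F a' * c := by
          rw [← algebraMap_smul F a' e, map_smul, LinearMap.smul_apply, hef, smul_eq_mul]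
        have h2 : φ (b' • f) f = 0 := by
          rw [← algebraMap_smul F b' f, map_smul, LinearMap.smul_apply, halt f, smul_zero]
        rw [map_sub, map_sub, LinearMap.sub_apply, LinearMap.sub_apply, h1, h2, ha']
        ring
    haveI : IsNoetherianRing O := inferInstance
    haveI := isNoetherian_of_fg_of_noetherian Λ ⟨S, hS⟩
    have hΛ'fg : Λ'.FG := by
      have h1 : Submodule.map Λ.subtype (Submodule.comap Λ.subtype Λ') = Λ' := by
        rw [Submodule.map_comap_subtype, inf_eq_right.mpr hΛ'le]
      rw [← h1]
      exact (IsNoetherian.noetherian _).map _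
    have hspan1 : Submodule.span F (Λ' : Set V) ≤ LinearMap.ker (φ e) := by
      rw [Submodule.span_le]
      intro w hw
      exact LinearMap.mem_ker.mpr (hker1 w hw)
    have hspan2 : Submodule.span F (Λ' : Set V) ≤ LinearMap.ker (φ.flip f) := by
      rw [Submodule.span_le]
      intro w hw
      rw [SetLike.mem_coe, LinearMap.mem_ker, LinearMap.flip_apply]
      exact hker2 w hw
    have hxe : ∀ x ∈ Submodule.span F (Λ' : Set V), φ x e = 0 ∧ φ x f = 0 := by
      intro x hx
      constructor
      · rw [my_skew φ halt e x, LinearMap.mem_ker.mp (hspan1 hx), neg_zero]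
      · have := hspan2 hx
        rw [LinearMap.mem_ker, LinearMap.flip_apply] at this
        exact this
    have hnd' : ∀ x ∈ Submodule.span F (Λ' : Set V),
        (∀ y ∈ Submodule.span F (Λ' : Set V), φ x y = 0) → x = 0 := by
      intro x hx hx0
      refine hnd x (Submodule.span_mono hΛ'le hx) ?_
      intro y hy
      induction hy using Submodule.span_induction with
      | mem y hy =>
        obtain ⟨a, b, hz⟩ := hdecomp y hy
        obtain ⟨h1, h2⟩ := hxe x hx
        have h3 : φ x (y - a • e - b • f) = 0 := hx0 _ (Submodule.subset_span hz)
        have h4 : φ x (a • e) = 0 := by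
          rw [← algebraMap_smul F a e, map_smul, h1, smul_zero]
        have h5 : φ x (b • f) = 0 := by
          rw [← algebraMap_smul F b f, map_smul, h2, smul_zero]
        have hy' : y = (y - a • e - b • f) + a • e + b • f := by abel
        rw [hy', map_add, map_add, h3, h4, h5]
        ring
      | zero => simp
      | add u v hu hv h1 h2 => simp [h1, h2]
      | smul a u hu h1 => simp [h1]
    have hlt : Submodule.span F (Λ' : Set V) < Submodule.span F (Λ : Set V) := by
      refine lt_of_le_of_ne (Submodule.span_mono hΛ'le) ?_
      intro heq
      have heΛ : e ∈ Submodule.span F (Λ : Set V) := Submodule.subset_span he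
      rw [← heq] at heΛ
      have h2 := (hxe e heΛ).2
      rw [hef] at h2
      exact hc0 h2
    have hrank' : Module.finrank F (Submodule.span F ((Λ' : Set V))) < N :=
      lt_of_lt_of_le (Submodule.finrank_lt_finrank_of_lt hlt) hrank
    obtain ⟨ι, e', f', he', hf', hsub', hee', hff'⟩ :=
      IH _ hrank' Λ' hΛ'fg le_rfl hnd'
    refine ⟨Option ι, fun o => o.elim e e', fun o => o.elim f f', ?_, ?_, ?_, ?_, ?_⟩
    · rintro (_ | i)
      exacts [he, hΛ'le (he' i)]
    · rintro (_ | i)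
      exacts [hf, hΛ'le (hf' i)]
    · intro z hz
      obtain ⟨a, b, hz'⟩ := hdecomp z hz
      have h1 : z = (z - a • e - b • f) + a • e + b • f := by abel
      show z ∈ Submodule.span O (Set.range (fun o : Option ι => o.elim e e') ∪
        Set.range (fun o : Option ι => o.elim f f'))
      have hmem1 : e ∈ Submodule.span O (Set.range (fun o : Option ι => o.elim e e') ∪
          Set.range (fun o : Option ι => o.elim f f')) :=
        Submodule.subset_span (Or.inl ⟨none, rfl⟩)
      have hmem2 : f ∈ Submodule.span O (Set.range (fun o : Option ι => o.elim e e') ∪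
          Set.range (fun o : Option ι => o.elim f f')) :=
        Submodule.subset_span (Or.inr ⟨none, rfl⟩)
      have hmem3 : z - a • e - b • f ∈ Submodule.span O
          (Set.range (fun o : Option ι => o.elim e e') ∪
            Set.range (fun o : Option ι => o.elim f f')) := by
        have h4 := hsub' hz'
        rw [SetLike.mem_coe] at h4
        refine Submodule.span_mono ?_ h4
        apply Set.union_subset_union
        · rintro - ⟨i, rfl⟩
          exact ⟨some i, rfl⟩
        · rintro - ⟨i, rfl⟩
          exact ⟨some i, rfl⟩
      rw [h1]
      exact Submodule.add_mem _ (Submodule.add_mem _ hmem3 (Submodule.smul_mem _ _ hmem1))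
        (Submodule.smul_mem _ _ hmem2)
    · rintro (_ | i) (_ | j)
      · exact halt e
      · exact hker1 _ (he' j)
      · show φ (e' i) e = 0
        rw [my_skew φ halt e (e' i), hker1 _ (he' i), neg_zero]
      · exact hee' i j
    · rintro (_ | i) (_ | j)
      · exact halt f
      · show φ f (f' j) = 0
        rw [my_skew φ halt (f' j) f, hker2 _ (hf' j), neg_zero]
      · exact hker2 _ (hf' i)
      · exact hff' i j


/-- let `F₀` be a non-Archimedean local field of characteristic `≠ 2`
with ring of integers `O₀`, `F/F₀` a finite separable extension with ring of
integers `O`, and `Λ` an `O`-lattice in a symplectic `F`-space `(V, φ)`.  Then the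
similitude character maps the stabilizer of `Λ` in `GSp_{F₀}(V, φ)(F₀)` onto
`O₀^×`: for every unit `t` of `O₀` there is an `F`-linear automorphism `g` of `V`
with `g(Λ) = Λ` and `φ(gx, gy) = t·φ(x, y)` for all `x, y ∈ V`. -/
theorem similitude_character_stabilizer_surjective
    (O₀ F₀ : Type) [CommRing O₀] [IsDomain O₀] [IsDiscreteValuationRing O₀]
    [Field F₀] [Algebra O₀ F₀] [IsFractionRing O₀ F₀]
    [IsAdicComplete (IsLocalRing.maximalIdeal O₀) O₀]
    [Finite (IsLocalRing.ResidueField O₀)]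
    (hchar : (2 : F₀) ≠ 0)
    (F : Type) [Field F] [Algebra F₀ F] [FiniteDimensional F₀ F] [Algebra.IsSeparable F₀ F]
    (O : Type) [CommRing O] [IsDomain O] [IsDiscreteValuationRing O]
    [Algebra O F] [IsFractionRing O F]
    [Algebra O₀ O] [Algebra O₀ F] [IsScalarTower O₀ O F] [IsScalarTower O₀ F₀ F]
    (π : O) (hπ : Irreducible π)
    (V : Type) [AddCommGroup V] [Module F V] [Module O V] [IsScalarTower O F V]
    (φ : V →ₗ[F] V →ₗ[F] F) (halt : ∀ x : V, φ x x = 0)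
    (hnd : LinearMap.BilinForm.Nondegenerate φ)
    (n : ℕ) (hn : 1 ≤ n) (hdim : Module.finrank F V = 2 * n)
    (Λ : Submodule O V) (hfg : Λ.FG) (hfull : Submodule.span F (Λ : Set V) = ⊤)
    (t : O₀ˣ) :
    ∃ g : V ≃ₗ[F] V, (∀ x : V, x ∈ Λ ↔ g x ∈ Λ) ∧
      ∀ x y : V, φ (g x) (g y) = algebraMap O₀ F (t : O₀) * φ x y := by
  haveI : FiniteDimensional F V := Module.finite_of_finrank_pos (by rw [hdim]; omega)
  have hN : Module.finrank F (Submodule.span F (Λ : Set V)) ≤ Module.finrank F V := by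
    rw [hfull]
    exact le_of_eq (finrank_top F V)
  have hnd0 : ∀ x ∈ Submodule.span F (Λ : Set V),
      (∀ y ∈ Submodule.span F (Λ : Set V), φ x y = 0) → x = 0 := by
    intro x _ h
    exact hnd.1 x fun y => h y (by rw [hfull]; trivial)
  obtain ⟨ι, e, f, he, hf, hsub, hee, hff⟩ :=
    my_key φ halt (Module.finrank F V) Λ hfg hN hnd0
  set WE := Submodule.span F (Set.range e) with hWE
  set WF := Submodule.span F (Set.range f) with hWF
  have hWEiso : ∀ x ∈ WE, ∀ y ∈ WE, φ x y = 0 := by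
    intro x hx y hy
    induction hx, hy using Submodule.span_induction₂ with
    | mem_mem u v hu hv =>
      obtain ⟨i, rfl⟩ := hu
      obtain ⟨j, rfl⟩ := hv
      exact hee i j
    | zero_left v hv => simp
    | zero_right u hu => simp
    | add_left u v w hu hv hw h1 h2 => simp [h1, h2]
    | add_right u v w hu hv hw h1 h2 => simp [h1, h2]
    | smul_left r u v hu hv h1 => simp [h1]
    | smul_right r u v hu hv h1 => simp [h1]
  have hWFiso : ∀ x ∈ WF, ∀ y ∈ WF, φ x y = 0 := by
    intro x hx y hy
    induction hx, hy using Submodule.span_induction₂ with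
    | mem_mem u v hu hv =>
      obtain ⟨i, rfl⟩ := hu
      obtain ⟨j, rfl⟩ := hv
      exact hff i j
    | zero_left v hv => simp
    | zero_right u hu => simp
    | add_left u v w hu hv hw h1 h2 => simp [h1, h2]
    | add_right u v w hu hv hw h1 h2 => simp [h1, h2]
    | smul_left r u v hu hv h1 => simp [h1]
    | smul_right r u v hu hv h1 => simp [h1]
  have hsup : WE ⊔ WF = ⊤ := by
    rw [hWE, hWF, ← Submodule.span_union]
    have h1 : (⊤ : Submodule F V) ≤ Submodule.span F (Set.range e ∪ Set.range f) := by
      rw [← hfull]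
      refine le_trans (Submodule.span_mono hsub) ?_
      rw [Submodule.span_span_of_tower]
    exact top_le_iff.mp h1
  have hdisj : WE ⊓ WF = ⊥ := by
    rw [eq_bot_iff]
    intro x hx
    have hx0 : x = 0 := by
      apply hnd.1
      intro y
      have hy : y ∈ WE ⊔ WF := by rw [hsup]; trivial
      obtain ⟨y1, hy1, y2, hy2, rfl⟩ := Submodule.mem_sup.mp hy
      rw [map_add, hWEiso x hx.1 y1 hy1, hWFiso x hx.2 y2 hy2, add_zero]
    simp [hx0]
  have hcompl : IsCompl WE WF := ⟨disjoint_iff.mpr hdisj, codisjoint_iff.mpr hsup⟩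
  set P := Submodule.linearProjOfIsCompl WE WF hcompl with hP
  set p : V →ₗ[F] V := WE.subtype.comp P with hp
  have hmemWE : ∀ x, p x ∈ WE := fun x => (P x).2
  have hp_left : ∀ w ∈ WE, p w = w := by
    intro w hw
    exact congrArg WE.subtype (Submodule.linearProjOfIsCompl_apply_left hcompl ⟨w, hw⟩)
  have hp_right : ∀ w ∈ WF, p w = 0 := by
    intro w hw
    have h1 : P w = 0 := Submodule.linearProjOfIsCompl_apply_right' hcompl hw
    show WE.subtype (P w) = 0
    rw [h1]
    rfl
  have hpp : ∀ x, p (p x) = p x := fun x => hp_left _ (hmemWE x)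
  have hq : ∀ x, x - p x ∈ WF := by
    intro x
    have hx : x ∈ WE ⊔ WF := by rw [hsup]; trivial
    obtain ⟨a, ha, b, hb, hab⟩ := Submodule.mem_sup.mp hx
    have h1 : p x = a := by rw [← hab, map_add, hp_left a ha, hp_right b hb, add_zero]
    rw [h1, ← hab]
    simpa using hb
  have hpΛ : ∀ z ∈ Λ, p z ∈ Λ := by
    intro z hz
    have h1 : ∀ w ∈ Submodule.span O (Set.range e ∪ Set.range f),
        p w ∈ Submodule.span O (Set.range e) := by
      intro w hw
      induction hw using Submodule.span_induction with
      | mem w hw =>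
        rcases hw with ⟨i, rfl⟩ | ⟨i, rfl⟩
        · rw [hp_left _ (Submodule.subset_span ⟨i, rfl⟩)]
          exact Submodule.subset_span ⟨i, rfl⟩
        · rw [hp_right _ (Submodule.subset_span ⟨i, rfl⟩)]
          exact Submodule.zero_mem _
      | zero => simp
      | add u v hu hv h1 h2 =>
        rw [map_add]
        exact Submodule.add_mem _ h1 h2
      | smul r u hu h1 =>
        have h2 : p (r • u) = r • p u := by
          rw [← algebraMap_smul F r u, map_smul, algebraMap_smul]
        rw [h2]
        exact Submodule.smul_mem _ _ h1
    have h2 : Submodule.span O (Set.range e) ≤ Λ := by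
      rw [Submodule.span_le]
      rintro - ⟨i, rfl⟩
      exact he i
    exact h2 (h1 z (hsub hz))
  set u : F := algebraMap O₀ F (t : O₀) with hu
  set u' : F := algebraMap O₀ F ((t⁻¹ : O₀ˣ) : O₀) with hu'
  have huu' : u * u' = 1 := by
    rw [hu, hu', ← map_mul]
    simp
  have hcomp : ∀ a b : F, a * b = 1 → ∀ x : V,
      ((LinearMap.id : V →ₗ[F] V) + (a - 1) • p)
        (((LinearMap.id : V →ₗ[F] V) + (b - 1) • p) x) = x := by
    intro a b hab x
    simp only [LinearMap.add_apply, LinearMap.id_apply, LinearMap.smul_apply, map_add,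
      map_smul, hpp]
    match_scalars
    · ring
    · linear_combination hab
  set glin : V →ₗ[F] V := LinearMap.id + (u - 1) • p with hglin
  set hlin : V →ₗ[F] V := LinearMap.id + (u' - 1) • p with hhlin
  set g : V ≃ₗ[F] V := LinearEquiv.ofLinear glin hlin
    (LinearMap.ext fun x => hcomp u u' huu' x)
    (LinearMap.ext fun x => hcomp u' u (by rw [mul_comm]; exact huu') x) with hg
  have hgapply : ∀ x, g x = x + (u - 1) • p x := by
    intro x
    rw [hg, LinearEquiv.ofLinear_apply, hglin]
    simp
  have hsymm : ∀ x, g.symm x = x + (u' - 1) • p x := by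
    intro x
    rw [hg, LinearEquiv.ofLinear_symm_apply, hhlin]
    simp
  have hsmulΛ : ∀ (s : O₀) (v : V), v ∈ Λ → algebraMap O₀ F s • v ∈ Λ := by
    intro s v hv
    rw [IsScalarTower.algebraMap_apply O₀ O F, algebraMap_smul]
    exact Λ.smul_mem _ hv
  have hpres : ∀ (a : F) (s : O₀), a = algebraMap O₀ F s → ∀ x ∈ Λ, x + (a - 1) • p x ∈ Λ := by
    intro a s hs x hx
    have h1 : a - 1 = algebraMap O₀ F (s - 1) := by rw [map_sub, map_one, hs]
    rw [h1]
    exact Submodule.add_mem _ hx (hsmulΛ _ _ (hpΛ x hx))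
  refine ⟨g, ?_, ?_⟩
  · intro x
    constructor
    · intro hx
      rw [hgapply]
      exact hpres u (t : O₀) hu x hx
    · intro hx
      have h1 : g.symm (g x) = x := g.symm_apply_apply x
      rw [hsymm] at h1
      rw [← h1]
      exact hpres u' _ hu' (g x) hx
  · intro x y
    have hgx : g x = u • p x + (x - p x) := by rw [hgapply]; module
    have hgy : g y = u • p y + (y - p y) := by rw [hgapply]; module
    have hE : φ (p x) (p y) = 0 := hWEiso _ (hmemWE x) _ (hmemWE y)
    have hF2 : φ (x - p x) (y - p y) = 0 := hWFiso _ (hq x) _ (hq y)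
    have hx2 : p x + (x - p x) = x := by abel
    have hy2 : p y + (y - p y) = y := by abel
    have hxy : φ x y = φ (p x) (p y) + φ (p x) (y - p y)
        + (φ (x - p x) (p y) + φ (x - p x) (y - p y)) := by
      have h3 : φ x y = φ (p x + (x - p x)) (p y + (y - p y)) := by rw [hx2, hy2]
      rw [h3]
      simp only [map_add, LinearMap.add_apply]
      ring
    rw [hgx, hgy, hxy]
    simp only [map_add, map_smul, LinearMap.add_apply, LinearMap.smul_apply, smul_eq_mul]
    rw [hE, hF2]
    ring
end

section
/- Define ν := ω − (1/2)·Σ_{v∈P} Σ_{j∈ℤ/f_vℤ} Σ_{i=1}^{m} ε^j_{v,i} ∈ X ⊗ ℚ and λ₀ := ω − Σ_{v∈P} ( ⌈f_v/2⌉ · Σ_{1≤i≤m, i odd} ε^{0}_{v,i} + ⌊f_v/2⌋ · Σ_{1≤i≤m, i even} ε^{0}_{v,i} ) ∈ X. Then ν − λ₀^◇ = Σ_{v∈P with f_v odd} Σ_{j∈ℤ/f_vℤ} (1/(2f_v)) · Σ_{1≤i≤m, i odd} α^{j∨}_{v,i}. In particular, the coefficient of ω in λ₀ is 1, and ν − λ₀^◇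 is a linear combination of the simple coroots α^{j∨}_{v,i} with all coefficients in [0, 1) ∩ ℚ. -/
open Finset

/-- Index set for the basis of the cocharacter lattice `X`: `none` is `ω`,
`some ⟨v, (j, i)⟩` is `ε^j_{v,i}` (with `i : Fin m` encoding the index `i+1 ∈ {1,…,m}`). -/
abbrev XIdx (P : Type) (f : P → ℕ) (m : ℕ) := Option ((v : P) × (ZMod (f v) × Fin m))

/-- The free `ℤ`-module `X` with basis `ω, ε^j_{v,i}`, with `ℚ`-coefficients. -/
abbrev XQ (P : Type) (f : P → ℕ) (m : ℕ) := XIdx P f m →₀ ℚ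

/-- The index shift underlying `σ`: `σ(ω) = ω`, `σ(ε^j_{v,i}) = ε^{j+1}_{v,i}`. -/
def xShift (P : Type) (f : P → ℕ) (m : ℕ) : XIdx P f m → XIdx P f m
  | none => none
  | some ⟨v, (j, i)⟩ => some ⟨v, (j + 1, i)⟩

/-- The automorphism `σ` of `X ⊗ ℚ`. -/
noncomputable def sigmaQ (P : Type) (f : P → ℕ) (m : ℕ) : Module.End ℚ (XQ P f m) :=
  Finsupp.lmapDomain ℚ ℚ (xShift P f m)

noncomputable def omegaQ (P : Type) (f : P → ℕ) (m : ℕ) : XQ P f m :=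
  Finsupp.single none 1

noncomputable def epsQ (P : Type) (f : P → ℕ) (m : ℕ) (v : P) (j : ZMod (f v)) (i : Fin m) :
    XQ P f m :=
  Finsupp.single (some ⟨v, (j, i)⟩) 1

/-- The simple coroot `α^{j∨}_{v,i}`: `ε^j_{v,i} − ε^j_{v,i+1}` for `i+1 ≤ m−1`,
and `ε^j_{v,m}` for the last index. -/
noncomputable def corootQ (P : Type) (f : P → ℕ) (m : ℕ) (v : P) (j : ZMod (f v)) (i : Fin m) :
    XQ P f m :=
  if h : (i : ℕ) + 1 < m then epsQ P f m v j i - epsQ P f m v j ⟨(i : ℕ) + 1, h⟩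
  else epsQ P f m v j i

/-- The Newton point `ν = ω − (1/2)·Σ_{v,j,i} ε^j_{v,i}`. -/
noncomputable def nuQ (P : Type) [Fintype P] (f : P → ℕ) [∀ v, NeZero (f v)] (m : ℕ) :
    XQ P f m :=
  omegaQ P f m -
    (1 / 2 : ℚ) • ∑ v : P, ∑ j : ZMod (f v), ∑ i : Fin m, epsQ P f m v j i

/-- `λ₀ = ω − Σ_v (⌈f_v/2⌉·Σ_{i odd} ε^0_{v,i} + ⌊f_v/2⌋·Σ_{i even} ε^0_{v,i})`
(indices `i ∈ {1,…,m}`, encoded by `Fin m` via `i ↦ i+1`). -/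
noncomputable def lamZeroQ (P : Type) [Fintype P] (f : P → ℕ) [∀ v, NeZero (f v)] (m : ℕ) :
    XQ P f m :=
  omegaQ P f m -
    ∑ v : P,
      ((((f v + 1) / 2 : ℕ) : ℚ) •
          ∑ i ∈ univ.filter (fun i : Fin m => Odd ((i : ℕ) + 1)), epsQ P f m v 0 i +
        (((f v / 2 : ℕ) : ℚ) •
          ∑ i ∈ univ.filter (fun i : Fin m => Even ((i : ℕ) + 1)), epsQ P f m v 0 i))

/-- `λ^◇ = (1/N)·Σ_{k=0}^{N−1} σ^k(λ)` for `N` a period of `λ`. -/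
noncomputable def diamondQ (P : Type) (f : P → ℕ) (m : ℕ) (N : ℕ) (lam : XQ P f m) :
    XQ P f m :=
  (N : ℚ)⁻¹ • ∑ k ∈ Finset.range N, (sigmaQ P f m ^ k) lam

section A
variable (P : Type) (f : P → ℕ) (m : ℕ)

lemma sigma_single (a : XIdx P f m) (c : ℚ) :
    sigmaQ P f m (Finsupp.single a c) = Finsupp.single (xShift P f m a) c := by
  simp [sigmaQ, Finsupp.mapDomain_single]

lemma sigma_omega : sigmaQ P f m (omegaQ P f m) = omegaQ P f m := by
  rw [omegaQ, sigma_single]; rfl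

lemma sigma_eps (v : P) (j : ZMod (f v)) (i : Fin m) :
    sigmaQ P f m (epsQ P f m v j i) = epsQ P f m v (j + 1) i := by
  rw [epsQ, sigma_single]; rfl

lemma sigma_pow_omega (k : ℕ) : (sigmaQ P f m ^ k) (omegaQ P f m) = omegaQ P f m := by
  induction k with
  | zero => simp
  | succ n ih => rw [pow_succ', Module.End.mul_apply, ih, sigma_omega]

lemma sigma_pow_eps (k : ℕ) (v : P) (j : ZMod (f v)) (i : Fin m) :
    (sigmaQ P f m ^ k) (epsQ P f m v j i) = epsQ P f m v (j + (k : ZMod (f v))) i := by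
  induction k generalizing j with
  | zero => simp
  | succ n ih =>
      rw [pow_succ, Module.End.mul_apply, sigma_eps, ih]
      congr 1
      push_cast
      ring

end A

section B
variable (P : Type) (f : P → ℕ) (m : ℕ)

/-- Sum of odd-index eps. -/
noncomputable def AQ (v : P) (j : ZMod (f v)) : XQ P f m :=
  ∑ i ∈ univ.filter (fun i : Fin m => Odd ((i : ℕ) + 1)), epsQ P f m v j i

/-- Sum of even-index eps. -/
noncomputable def BQ (v : P) (j : ZMod (f v)) : XQ P f m :=
  ∑ i ∈ univ.filter (fun i : Fin m => Even ((i : ℕ) + 1)), epsQ P f m v j i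

lemma sigma_pow_AQ (k : ℕ) (v : P) (j : ZMod (f v)) :
    (sigmaQ P f m ^ k) (AQ P f m v j) = AQ P f m v (j + (k : ZMod (f v))) := by
  rw [AQ, map_sum]
  exact Finset.sum_congr rfl fun i _ => sigma_pow_eps P f m k v j i

lemma sigma_pow_BQ (k : ℕ) (v : P) (j : ZMod (f v)) :
    (sigmaQ P f m ^ k) (BQ P f m v j) = BQ P f m v (j + (k : ZMod (f v))) := by
  rw [BQ, map_sum]
  exact Finset.sum_congr rfl fun i _ => sigma_pow_eps P f m k v j i

end B

section C
variable (P : Type) [Fintype P] (f : P → ℕ) [∀ v, NeZero (f v)] (m : ℕ)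


lemma lamZero_eq :
    lamZeroQ P f m = omegaQ P f m -
      ∑ v : P, ((((f v + 1) / 2 : ℕ) : ℚ) • AQ P f m v 0 +
        (((f v / 2 : ℕ) : ℚ) • BQ P f m v 0)) := rfl

lemma sigma_pow_lam (k : ℕ) :
    (sigmaQ P f m ^ k) (lamZeroQ P f m) = omegaQ P f m -
      ∑ v : P, ((((f v + 1) / 2 : ℕ) : ℚ) • AQ P f m v (k : ZMod (f v)) +
        (((f v / 2 : ℕ) : ℚ) • BQ P f m v (k : ZMod (f v)))) := by
  rw [lamZero_eq, map_sub, sigma_pow_omega, map_sum]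
  congr 1
  refine Finset.sum_congr rfl fun v _ => ?_
  rw [map_add, map_smul, map_smul, sigma_pow_AQ, sigma_pow_BQ, zero_add]

end C

section Count
variable {M : Type*} [AddCommMonoid M]

lemma sum_range_mul_zmod {d : ℕ} (q : ℕ) (g : ZMod d → M) :
    ∑ k ∈ range (d * q), g ((k : ℕ) : ZMod d) = q • ∑ k ∈ range d, g ((k : ℕ) : ZMod d) := by
  induction q with
  | zero => simp
  | succ n ih =>
      rw [Nat.mul_succ, Finset.sum_range_add, ih, succ_nsmul]
      congr 1
      refine Finset.sum_congr rfl fun x _ => ?_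
      congr 1
      push_cast
      simp [ZMod.natCast_self]

lemma sum_range_zmod_univ {d : ℕ} [NeZero d] (g : ZMod d → M) :
    ∑ k ∈ range d, g ((k : ℕ) : ZMod d) = ∑ j : ZMod d, g j := by
  refine Finset.sum_bij' (fun k _ => ((k : ℕ) : ZMod d)) (fun j _ => j.val) ?_ ?_ ?_ ?_ ?_
  · intro a _; exact Finset.mem_univ _
  · intro j _; exact Finset.mem_range.2 (ZMod.val_lt j)
  · intro a ha; rw [ZMod.val_cast_of_lt (Finset.mem_range.1 ha)]
  · intro j _; exact ZMod.natCast_zmod_val j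
  · intro a _; rfl

lemma sum_range_zmod {d N : ℕ} [NeZero d] (hdvd : d ∣ N) (g : ZMod d → M) :
    ∑ k ∈ range N, g ((k : ℕ) : ZMod d) = (N / d) • ∑ j : ZMod d, g j := by
  obtain ⟨q, rfl⟩ := hdvd
  rw [sum_range_mul_zmod, sum_range_zmod_univ, Nat.mul_div_cancel_left _ (Nat.pos_of_ne_zero (NeZero.ne d))]

end Count


section D
variable (P : Type) [Fintype P] (f : P → ℕ) [∀ v, NeZero (f v)] (m : ℕ)

lemma diamond_eq (N : ℕ) (hN : 0 < N) (hdvd : ∀ v, f v ∣ N) :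
    diamondQ P f m N (lamZeroQ P f m) = omegaQ P f m -
      ∑ v : P, ((((((f v + 1) / 2 : ℕ) : ℚ) / (f v : ℚ)) • ∑ j : ZMod (f v), AQ P f m v j) +
        ((((f v / 2 : ℕ) : ℚ) / (f v : ℚ)) • ∑ j : ZMod (f v), BQ P f m v j)) := by
  have h1 : ∑ k ∈ range N, (sigmaQ P f m ^ k) (lamZeroQ P f m)
      = (N : ℚ) • omegaQ P f m -
        ∑ v : P, ((((f v + 1) / 2 : ℕ) : ℚ) •
            (((N / f v : ℕ) : ℚ) • ∑ j : ZMod (f v), AQ P f m v j) +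
          (((f v / 2 : ℕ) : ℚ) •
            (((N / f v : ℕ) : ℚ) • ∑ j : ZMod (f v), BQ P f m v j))) := by
    rw [Finset.sum_congr rfl (fun k _ => sigma_pow_lam P f m k), Finset.sum_sub_distrib,
      Finset.sum_const, card_range, Finset.sum_comm]
    congr 1
    · refine Finset.sum_congr rfl fun v _ => ?_
      rw [Finset.sum_add_distrib, ← Finset.smul_sum, ← Finset.smul_sum,
        sum_range_zmod (hdvd v) (fun j => AQ P f m v j),
        sum_range_zmod (hdvd v) (fun j => BQ P f m v j)]
      simp [Nat.cast_smul_eq_nsmul]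
  rw [diamondQ, h1, smul_sub, smul_smul, inv_mul_cancel₀ (by exact_mod_cast hN.ne' : (N : ℚ) ≠ 0),
    one_smul, Finset.smul_sum]
  congr 1
  refine Finset.sum_congr rfl fun v _ => ?_
  have hd0 : (f v : ℚ) ≠ 0 := Nat.cast_ne_zero.2 (NeZero.ne (f v))
  have hcast : ((N / f v : ℕ) : ℚ) = (N : ℚ) / (f v : ℚ) := by
    rw [Nat.cast_div (hdvd v) hd0]
  rw [smul_add, smul_smul, smul_smul, smul_smul, smul_smul, hcast]
  have hN0 : (N : ℚ) ≠ 0 := by exact_mod_cast hN.ne'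
  congr 2 <;> field_simp <;> ring

end D


section E
variable (P : Type) [Fintype P] (f : P → ℕ) [∀ v, NeZero (f v)] (m : ℕ)

lemma eps_sum_split (v : P) (j : ZMod (f v)) :
    ∑ i : Fin m, epsQ P f m v j i = AQ P f m v j + BQ P f m v j := by
  rw [AQ, BQ, ← Finset.sum_filter_add_sum_filter_not univ (fun i : Fin m => Odd ((i : ℕ) + 1))
    (fun i => epsQ P f m v j i)]
  congr 1
  refine Finset.sum_congr ?_ (fun _ _ => rfl)
  ext i
  simp [Nat.not_odd_iff_even]

lemma nu_sub_diamond (N : ℕ) (hN : 0 < N) (hdvd : ∀ v, f v ∣ N) :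
    nuQ P f m - diamondQ P f m N (lamZeroQ P f m) =
      ∑ v ∈ univ.filter (fun v : P => Odd (f v)), ∑ j : ZMod (f v),
        (1 / (2 * (f v : ℚ))) • (AQ P f m v j - BQ P f m v j) := by
  rw [nuQ, diamond_eq P f m N hN hdvd]
  have hsub : ∀ a x y : XQ P f m, (a - x) - (a - y) = y - x := by intros; abel
  rw [hsub]
  have hS : (1 / 2 : ℚ) • ∑ v : P, ∑ j : ZMod (f v), ∑ i : Fin m, epsQ P f m v j i
      = ∑ v : P, ((1 / 2 : ℚ) • ((∑ j : ZMod (f v), AQ P f m v j) +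
          ∑ j : ZMod (f v), BQ P f m v j)) := by
    rw [Finset.smul_sum]
    refine Finset.sum_congr rfl fun v _ => ?_
    congr 1
    rw [← Finset.sum_add_distrib]
    exact Finset.sum_congr rfl fun j _ => eps_sum_split P f m v j
  rw [hS, ← Finset.sum_sub_distrib,
    ← Finset.sum_filter_add_sum_filter_not univ (fun v : P => Odd (f v))]
  have heven : ∑ v ∈ univ.filter (fun v : P => ¬ Odd (f v)),
      (((((f v + 1) / 2 : ℕ) : ℚ) / (f v : ℚ)) • ∑ j : ZMod (f v), AQ P f m v j +
        ((((f v / 2 : ℕ) : ℚ) / (f v : ℚ)) • ∑ j : ZMod (f v), BQ P f m v j) -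
        (1 / 2 : ℚ) • ((∑ j : ZMod (f v), AQ P f m v j) + ∑ j : ZMod (f v), BQ P f m v j)) = 0 := by
    refine Finset.sum_eq_zero fun v hv => ?_
    obtain ⟨t, ht⟩ := Nat.not_odd_iff_even.1 (Finset.mem_filter.1 hv).2
    have ht0 : t ≠ 0 := by have := NeZero.ne (f v); omega
    have hfa : (((f v + 1) / 2 : ℕ) : ℚ) = t := by rw [ht]; congr 1; omega
    have hfb : ((f v / 2 : ℕ) : ℚ) = t := by rw [ht]; congr 1; omega
    have hfd : (f v : ℚ) = 2 * t := by rw [ht]; push_cast; ring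
    rw [hfa, hfb, hfd]
    match_scalars <;> field_simp <;> ring
  rw [heven, add_zero]
  refine Finset.sum_congr rfl fun v hv => ?_
  obtain ⟨t, ht⟩ := (Finset.mem_filter.1 hv).2
  have hfa : (((f v + 1) / 2 : ℕ) : ℚ) = t + 1 := by
    have h : (f v + 1) / 2 = t + 1 := by omega
    rw [h]; push_cast; ring
  have hfb : ((f v / 2 : ℕ) : ℚ) = t := by
    have h : f v / 2 = t := by omega
    rw [h]
  have hfd : (f v : ℚ) = 2 * t + 1 := by rw [ht]; push_cast; ring
  have hrhs : ∑ j : ZMod (f v), (1 / (2 * (f v : ℚ))) • (AQ P f m v j - BQ P f m v j)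
      = (1 / (2 * (f v : ℚ))) • ((∑ j : ZMod (f v), AQ P f m v j) -
          ∑ j : ZMod (f v), BQ P f m v j) := by
    rw [← Finset.smul_sum, Finset.sum_sub_distrib]
  rw [hrhs, hfa, hfb, hfd]
  match_scalars <;> field_simp <;> ring

end E


section F
variable (P : Type) (f : P → ℕ) (m : ℕ)

/-- `epsQ` extended by zero beyond `m`. -/
noncomputable def EQ (v : P) (j : ZMod (f v)) (n : ℕ) : XQ P f m :=
  if h : n < m then epsQ P f m v j ⟨n, h⟩ else 0

lemma EQ_of_lt (v : P) (j : ZMod (f v)) (i : Fin m) : EQ P f m v j (i : ℕ) = epsQ P f m v j i := by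
  rw [EQ, dif_pos i.isLt]

lemma coroot_eq_EQ (v : P) (j : ZMod (f v)) (i : Fin m) :
    corootQ P f m v j i = EQ P f m v j (i : ℕ) - EQ P f m v j ((i : ℕ) + 1) := by
  by_cases h : (i : ℕ) + 1 < m
  · rw [corootQ, dif_pos h, EQ_of_lt]
    simp only [EQ]
    rw [dif_pos h]
  · rw [corootQ, dif_neg h, EQ_of_lt]
    simp only [EQ]
    rw [dif_neg h, sub_zero]

lemma coroot_sum (v : P) (j : ZMod (f v)) :
    ∑ i ∈ univ.filter (fun i : Fin m => Odd ((i : ℕ) + 1)), corootQ P f m v j i =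
      AQ P f m v j - BQ P f m v j := by
  have hA : AQ P f m v j = ∑ n ∈ range m, (if Odd (n + 1) then EQ P f m v j n else 0) := by
    rw [AQ, Finset.sum_filter, ← Fin.sum_univ_eq_sum_range]
    exact Finset.sum_congr rfl fun i _ => by rw [EQ_of_lt]
  have hB : BQ P f m v j = ∑ n ∈ range m, (if Odd n then EQ P f m v j n else 0) := by
    rw [BQ, Finset.sum_filter, ← Fin.sum_univ_eq_sum_range]
    refine Finset.sum_congr rfl fun i _ => ?_
    rw [EQ_of_lt, if_congr (by rw [Nat.even_add_one, Nat.not_even_iff_odd]) rfl rfl]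
  have key : ∑ n ∈ range m, (if Odd (n + 1) then EQ P f m v j (n + 1) else 0)
      = ∑ n ∈ range m, (if Odd n then EQ P f m v j n else 0) := by
    have h0 : (if Odd 0 then EQ P f m v j 0 else 0) = 0 := by
      rw [if_neg (by decide)]
    have hm' : (if Odd m then EQ P f m v j m else 0) = 0 := by
      simp only [EQ]
      rw [dif_neg (lt_irrefl m)]; simp
    calc ∑ n ∈ range m, (if Odd (n + 1) then EQ P f m v j (n + 1) else 0)
        = (∑ n ∈ range m, (if Odd (n + 1) then EQ P f m v j (n + 1) else 0)) +
            (if Odd 0 then EQ P f m v j 0 else 0) := by rw [h0, add_zero]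
      _ = ∑ n ∈ range (m + 1), (if Odd n then EQ P f m v j n else 0) := by
            rw [Finset.sum_range_succ']
      _ = ∑ n ∈ range m, (if Odd n then EQ P f m v j n else 0) := by
            rw [Finset.sum_range_succ, hm', add_zero]
  rw [Finset.sum_filter]
  have step : (∑ a : Fin m, if Odd ((a : ℕ) + 1) then corootQ P f m v j a else 0)
      = ∑ n ∈ range m,
          (if Odd (n + 1) then EQ P f m v j n - EQ P f m v j (n + 1) else 0) := by
    rw [← Fin.sum_univ_eq_sum_range
      (fun n => if Odd (n + 1) then EQ P f m v j n - EQ P f m v j (n + 1) else 0)]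
    refine Finset.sum_congr rfl fun i _ => ?_
    rw [coroot_eq_EQ]
  rw [step, hA, hB, ← key, ← Finset.sum_sub_distrib]
  refine Finset.sum_congr rfl fun n _ => ?_
  split <;> simp

end F

section G
variable (P : Type) (f : P → ℕ) (m : ℕ)

lemma AQ_apply_same (v : P) (j j₀ : ZMod (f v)) (i₀ : Fin m) :
    AQ P f m v j (some ⟨v, (j₀, i₀)⟩) =
      if j = j₀ ∧ Odd ((i₀ : ℕ) + 1) then 1 else 0 := by
  rw [AQ, Finsupp.finset_sum_apply]
  by_cases hj : j = j₀
  · subst hj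
    by_cases hi : Odd ((i₀ : ℕ) + 1)
    · rw [if_pos ⟨rfl, hi⟩]
      rw [Finset.sum_eq_single i₀]
      · simp [epsQ, Finsupp.single_apply]
      · intro i _ hne
        simp [epsQ, Finsupp.single_apply, hne]
      · intro h
        exact absurd (Finset.mem_filter.2 ⟨Finset.mem_univ i₀, hi⟩) h
    · rw [if_neg (by tauto)]
      refine Finset.sum_eq_zero fun i hi' => ?_
      have : i ≠ i₀ := fun h => hi (h ▸ (Finset.mem_filter.1 hi').2)
      simp [epsQ, Finsupp.single_apply, this]
  · rw [if_neg (by tauto)]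
    refine Finset.sum_eq_zero fun i _ => ?_
    simp [epsQ, Finsupp.single_apply, hj]

lemma BQ_apply_same (v : P) (j j₀ : ZMod (f v)) (i₀ : Fin m) :
    BQ P f m v j (some ⟨v, (j₀, i₀)⟩) =
      if j = j₀ ∧ Even ((i₀ : ℕ) + 1) then 1 else 0 := by
  rw [BQ, Finsupp.finset_sum_apply]
  by_cases hj : j = j₀
  · subst hj
    by_cases hi : Even ((i₀ : ℕ) + 1)
    · rw [if_pos ⟨rfl, hi⟩]
      rw [Finset.sum_eq_single i₀]
      · simp [epsQ, Finsupp.single_apply]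
      · intro i _ hne
        simp [epsQ, Finsupp.single_apply, hne]
      · intro h
        exact absurd (Finset.mem_filter.2 ⟨Finset.mem_univ i₀, hi⟩) h
    · rw [if_neg (by tauto)]
      refine Finset.sum_eq_zero fun i hi' => ?_
      have : i ≠ i₀ := fun h => hi (h ▸ (Finset.mem_filter.1 hi').2)
      simp [epsQ, Finsupp.single_apply, this]
  · rw [if_neg (by tauto)]
    refine Finset.sum_eq_zero fun i _ => ?_
    simp [epsQ, Finsupp.single_apply, hj]

lemma AQ_apply_ne {v v₀ : P} (h : v ≠ v₀) (j : ZMod (f v)) (x : ZMod (f v₀) × Fin m) :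
    AQ P f m v j (some ⟨v₀, x⟩) = 0 := by
  rw [AQ, Finsupp.finset_sum_apply]
  refine Finset.sum_eq_zero fun i _ => ?_
  simp [epsQ, Finsupp.single_apply, h]

lemma BQ_apply_ne {v v₀ : P} (h : v ≠ v₀) (j : ZMod (f v)) (x : ZMod (f v₀) × Fin m) :
    BQ P f m v j (some ⟨v₀, x⟩) = 0 := by
  rw [BQ, Finsupp.finset_sum_apply]
  refine Finset.sum_eq_zero fun i _ => ?_
  simp [epsQ, Finsupp.single_apply, h]

lemma AQ_apply_none (v : P) (j : ZMod (f v)) : AQ P f m v j none = 0 := by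
  rw [AQ, Finsupp.finset_sum_apply]
  exact Finset.sum_eq_zero fun i _ => by simp [epsQ, Finsupp.single_apply]

lemma BQ_apply_none (v : P) (j : ZMod (f v)) : BQ P f m v j none = 0 := by
  rw [BQ, Finsupp.finset_sum_apply]
  exact Finset.sum_eq_zero fun i _ => by simp [epsQ, Finsupp.single_apply]

end G

section H
variable (P : Type) [Fintype P] (f : P → ℕ) [∀ v, NeZero (f v)] (m : ℕ)

lemma lamZero_none : lamZeroQ P f m none = 1 := by
  rw [lamZero_eq, Finsupp.sub_apply, Finsupp.finset_sum_apply]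
  have h : ∑ v : P, ((((f v + 1) / 2 : ℕ) : ℚ) • AQ P f m v 0 +
      (((f v / 2 : ℕ) : ℚ) • BQ P f m v 0)) none = 0 := by
    refine Finset.sum_eq_zero fun v _ => ?_
    rw [Finsupp.add_apply, Finsupp.smul_apply, Finsupp.smul_apply,
      AQ_apply_none, BQ_apply_none]
    simp
  rw [h, sub_zero, omegaQ, Finsupp.single_eq_same]

lemma T_apply (a b : P → ℚ) (jv : ∀ v : P, ZMod (f v)) (v₀ : P) (j₀ : ZMod (f v₀))
    (i₀ : Fin m) :
    (∑ v : P, (a v • AQ P f m v (jv v) + b v • BQ P f m v (jv v))) (some ⟨v₀, (j₀, i₀)⟩) =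
      (if jv v₀ = j₀ then (if Odd ((i₀ : ℕ) + 1) then a v₀ else b v₀) else 0) := by
  rw [Finsupp.finset_sum_apply, Finset.sum_eq_single v₀]
  · rw [Finsupp.add_apply, Finsupp.smul_apply, Finsupp.smul_apply, AQ_apply_same, BQ_apply_same]
    by_cases hj : jv v₀ = j₀ <;> by_cases hi : Odd ((i₀ : ℕ) + 1)
    · have he : ¬ Even ((i₀ : ℕ) + 1) := by rwa [Nat.not_even_iff_odd]
      simp [hj, hi, he]
    · have he : Even ((i₀ : ℕ) + 1) := Nat.not_odd_iff_even.1 hi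
      simp [hj, hi, he]
    · simp [hj, hi]
    · simp [hj, hi]
  · intro v _ hne
    rw [Finsupp.add_apply, Finsupp.smul_apply, Finsupp.smul_apply,
      AQ_apply_ne P f m hne, BQ_apply_ne P f m hne]
    simp
  · intro h
    exact absurd (Finset.mem_univ v₀) h

lemma dvd_of_per (hm : 1 ≤ m) (N : ℕ)
    (hper : (sigmaQ P f m ^ N) (lamZeroQ P f m) = lamZeroQ P f m) (v : P) : f v ∣ N := by
  have h1 := sigma_pow_lam P f m N
  rw [hper, lamZero_eq] at h1
  have h2 := sub_right_inj.1 h1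
  have h3 := congrArg
    (fun x : XQ P f m => x (some ⟨v, ((N : ZMod (f v)), ⟨0, hm⟩)⟩)) h2
  rw [T_apply P f m _ _ (fun v => (0 : ZMod (f v))) v _ _,
    T_apply P f m _ _ (fun v => ((N : ℕ) : ZMod (f v))) v _ _] at h3
  have hodd : Odd ((((⟨0, hm⟩ : Fin m) : ℕ)) + 1) := by norm_num
  rw [if_pos rfl, if_pos hodd] at h3
  by_cases h : (0 : ZMod (f v)) = ((N : ℕ) : ZMod (f v))
  · exact (ZMod.natCast_eq_zero_iff N (f v)).1 h.symm
  · rw [if_neg h] at h3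
    have hpos : (0 : ℚ) < (((f v + 1) / 2 : ℕ) : ℚ) := by
      have := NeZero.ne (f v)
      have : 1 ≤ (f v + 1) / 2 := by omega
      exact_mod_cast Nat.lt_of_lt_of_le Nat.zero_lt_one this
    rw [← h3] at hpos
    exact absurd hpos (lt_irrefl 0)

end H

section I
variable (P : Type) [Fintype P] (f : P → ℕ) [∀ v, NeZero (f v)] (m : ℕ)

noncomputable def cCoef : ((v : P) × (ZMod (f v) × Fin m)) → ℚ :=
  fun t => if Odd (f t.1) ∧ Odd ((t.2.2 : ℕ) + 1) then 1 / (2 * (f t.1 : ℚ)) else 0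

lemma cCoef_bounds (t : (v : P) × (ZMod (f v) × Fin m)) :
    0 ≤ cCoef P f m t ∧ cCoef P f m t < 1 := by
  rw [cCoef]
  split
  · have hf : (1 : ℚ) ≤ (f t.1 : ℚ) := by
      exact_mod_cast Nat.one_le_iff_ne_zero.2 (NeZero.ne (f t.1))
    constructor
    · positivity
    · rw [div_lt_one (by linarith)]
      linarith
  · exact ⟨le_refl 0, zero_lt_one⟩

lemma cCoef_sum :
    ∑ t : (v : P) × (ZMod (f v) × Fin m), cCoef P f m t • corootQ P f m t.1 t.2.1 t.2.2 =
      ∑ v ∈ univ.filter (fun v : P => Odd (f v)), ∑ j : ZMod (f v),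
        (1 / (2 * (f v : ℚ))) •
          ∑ i ∈ univ.filter (fun i : Fin m => Odd ((i : ℕ) + 1)), corootQ P f m v j i := by
  rw [← Finset.univ_sigma_univ, Finset.sum_sigma]
  have hinner : ∀ v : P,
      ∑ p : ZMod (f v) × Fin m, cCoef P f m ⟨v, p⟩ • corootQ P f m v p.1 p.2
        = (if Odd (f v) then ∑ j : ZMod (f v), (1 / (2 * (f v : ℚ))) •
            ∑ i ∈ univ.filter (fun i : Fin m => Odd ((i : ℕ) + 1)), corootQ P f m v j i
          else 0) := by
    intro v
    rw [Fintype.sum_prod_type]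
    by_cases hv : Odd (f v)
    · rw [if_pos hv]
      refine Finset.sum_congr rfl fun j _ => ?_
      rw [Finset.smul_sum, Finset.sum_filter]
      refine Finset.sum_congr rfl fun i _ => ?_
      rw [cCoef]
      simp only [hv, true_and]
      split <;> simp
    · rw [if_neg hv]
      refine Finset.sum_eq_zero fun j _ => Finset.sum_eq_zero fun i _ => ?_
      rw [cCoef, if_neg (by tauto), zero_smul]
  rw [Finset.sum_congr rfl fun v _ => hinner v, ← Finset.sum_filter]

end I

/-- `ν − λ₀^◇ = Σ_{v : f_v odd} Σ_{j} (1/(2f_v)) Σ_{i odd} α^{j∨}_{v,i}`;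
in particular the coefficient of `ω` in `λ₀` is `1`, and `ν − λ₀^◇` is a linear
combination of simple coroots with coefficients in `[0,1) ∩ ℚ`. -/
theorem best_integral_approximation (P : Type) [Fintype P] [Nonempty P]
    (f : P → ℕ) [∀ v, NeZero (f v)] (m : ℕ) (hm : 1 ≤ m)
    (N : ℕ) (hN : 0 < N) (hper : (sigmaQ P f m ^ N) (lamZeroQ P f m) = lamZeroQ P f m) :
    (nuQ P f m - diamondQ P f m N (lamZeroQ P f m) =
      ∑ v ∈ univ.filter (fun v : P => Odd (f v)), ∑ j : ZMod (f v),
        (1 / (2 * (f v : ℚ))) •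
          ∑ i ∈ univ.filter (fun i : Fin m => Odd ((i : ℕ) + 1)), corootQ P f m v j i) ∧
    (lamZeroQ P f m) none = 1 ∧
    (∃ c : ((v : P) × (ZMod (f v) × Fin m)) → ℚ,
      (∀ t, 0 ≤ c t ∧ c t < 1) ∧
      nuQ P f m - diamondQ P f m N (lamZeroQ P f m) =
        ∑ t : (v : P) × (ZMod (f v) × Fin m), c t • corootQ P f m t.1 t.2.1 t.2.2) := by
  have hdvd : ∀ v, f v ∣ N := dvd_of_per P f m hm N hper
  refine ⟨?_, lamZero_none P f m, ?_⟩
  · rw [nu_sub_diamond P f m N hN hdvd]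
    exact Finset.sum_congr rfl fun v _ => Finset.sum_congr rfl fun j _ => by
      rw [coroot_sum]
  · refine ⟨cCoef P f m, cCoef_bounds P f m, ?_⟩
    rw [cCoef_sum, nu_sub_diamond P f m N hN hdvd]
    exact (Finset.sum_congr rfl fun v _ => Finset.sum_congr rfl fun j _ => by
      rw [coroot_sum]).symm
end

section
/- Let q ≥ 2 be a real number and m ≥ 1 an integer, and for an integer 0 ≤ c ≤ ⌊m/2⌋ set κ(m, c) := ∏_{i=1}^{c} (q^{4i} − 1) · ∏_{i=1}^{m−2c} (q^i − (−1)^i). Then: if m is odd, κ(m, c) < κ(m, 0) for every 1 ≤ c ≤ ⌊m/2⌋; and if m is even, κ(m, c) < κ(m, m/2) for every 0 ≤ c ≤ m/2 − 1. That is, κ(m, ·) attains its maximum precisely at c = 0 when m is odd and precisely at c = m/2 when m is even. -/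
open Finset

private lemma core1 (q : ℝ) (hq : 2 ≤ q) (a b c : ℕ) (ha : 1 ≤ a) (hb : 2*a ≤ b)
    (hc : 2*a+1 ≤ c) : q^(4*a) - 1 < (q^b - 1) * (q^c + 1) := by
  have hq1 : (1:ℝ) ≤ q := by linarith
  have hX : (2:ℝ) ≤ q^(2*a) := by
    calc (2:ℝ) ≤ q := hq
    _ = q^1 := (pow_one q).symm
    _ ≤ q^(2*a) := pow_le_pow_right₀ hq1 (by omega)
  have hb' : q^(2*a) ≤ q^b := pow_le_pow_right₀ hq1 hb
  have hc' : q^(2*a+1) ≤ q^c := pow_le_pow_right₀ hq1 hc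
  have h4 : q^(4*a) = q^(2*a) * q^(2*a) := by rw [← pow_add]; ring_nf
  have hs : q^(2*a+1) = q^(2*a) * q := by rw [pow_succ]
  have step1 : (q^(2*a) - 1) * (q^(2*a)*q + 1) ≤ (q^b - 1) * (q^c + 1) := by
    apply mul_le_mul (by linarith) (by rw [← hs]; linarith) (by nlinarith) (by linarith)
  nlinarith [mul_pos (mul_pos (show (0:ℝ) < q^(2*a) - 1 by linarith)
    (show (0:ℝ) < q - 1 by linarith)) (show (0:ℝ) < q^(2*a) by linarith)]

private lemma core2 (q : ℝ) (hq : 2 ≤ q) (a d : ℕ) (hd : 4*a+4 ≤ d) :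
    (q^(2*a+1) + 1) * (q^(2*a+2) - 1) < q^d - 1 := by
  have hq1 : (1:ℝ) ≤ q := by linarith
  have hY : (2:ℝ) ≤ q^(2*a+1) := by
    calc (2:ℝ) ≤ q := hq
    _ = q^1 := (pow_one q).symm
    _ ≤ q^(2*a+1) := pow_le_pow_right₀ hq1 (by omega)
  have hs : q^(2*a+2) = q^(2*a+1) * q := by rw [pow_succ]
  have hd' : q^(4*a+4) ≤ q^d := pow_le_pow_right₀ hq1 hd
  have h4 : q^(4*a+4) = (q^(2*a+1) * q) * (q^(2*a+1) * q) := by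
    rw [← hs, ← pow_add]; ring_nf
  nlinarith [mul_pos (mul_pos (show (0:ℝ) < q^(2*a+1) by linarith)
    (show (0:ℝ) < q - 1 by linarith))
    (show (0:ℝ) < q^(2*a+1) * q - 1 by nlinarith)]

private lemma gpos (q : ℝ) (hq : 2 ≤ q) {i : ℕ} (hi : 1 ≤ i) :
    0 < q^i - (-1:ℝ)^i := by
  have h1 : (1:ℝ) < q^i := one_lt_pow₀ (by linarith) (by omega)
  have h2 : ((-1:ℝ))^i ≤ 1 := by
    rcases Nat.even_or_odd i with h | h
    · rw [h.neg_one_pow]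
    · rw [h.neg_one_pow]; linarith
  linarith

private lemma fpos (q : ℝ) (hq : 2 ≤ q) {i : ℕ} (hi : 1 ≤ i) :
    0 < q^(4*i) - 1 := by
  have h1 : (1:ℝ) < q^(4*i) := one_lt_pow₀ (by linarith) (by omega)
  linarith

private lemma gprod_nonneg (q : ℝ) (hq : 2 ≤ q) (a b : ℕ) (ha : 1 ≤ a) :
    0 ≤ ∏ i ∈ Icc a b, (q^i - (-1:ℝ)^i) := by
  apply Finset.prod_nonneg
  intro i hi
  exact le_of_lt (gpos q hq (le_trans ha (Finset.mem_Icc.mp hi).1))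

private lemma fprod_nonneg (q : ℝ) (hq : 2 ≤ q) (a b : ℕ) (ha : 1 ≤ a) :
    0 ≤ ∏ i ∈ Icc a b, (q^(4*i) - (1:ℝ)) := by
  apply Finset.prod_nonneg
  intro i hi
  exact le_of_lt (fpos q hq (le_trans ha (Finset.mem_Icc.mp hi).1))

/-- Key lemma for even `m`: `B(2k) < ∏_{i=c+1}^{c+k} (q^{4i}-1)` for `k ≥ 1`. -/
private lemma evenKey (q : ℝ) (hq : 2 ≤ q) (k : ℕ) (hk : 1 ≤ k) (c : ℕ) :
    (∏ i ∈ Icc 1 (2*k), (q^i - (-1:ℝ)^i)) < ∏ i ∈ Icc (c+1) (c+k), (q^(4*i) - 1) := by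
  induction k, hk using Nat.le_induction with
  | base =>
    have e1 : (∏ i ∈ Icc 1 (2*1), (q^i - (-1:ℝ)^i)) = (q^1 + 1) * (q^2 - 1) := by
      rw [show 2*1 = 1+1 from rfl, Finset.prod_Icc_succ_top (by omega), Finset.Icc_self,
        Finset.prod_singleton]
      norm_num
    have e2 : (∏ i ∈ Icc (c+1) (c+1), (q^(4*i) - (1:ℝ))) = q^(4*(c+1)) - 1 := by
      rw [Finset.Icc_self, Finset.prod_singleton]
    rw [e1, e2]
    have := core2 q hq 0 (4*(c+1)) (by omega)
    simpa using this
  | succ k hk ih =>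
    have e1 : (∏ i ∈ Icc 1 (2*(k+1)), (q^i - (-1:ℝ)^i)) =
        (∏ i ∈ Icc 1 (2*k), (q^i - (-1:ℝ)^i)) *
          ((q^(2*k+1) - (-1:ℝ)^(2*k+1)) * (q^(2*k+2) - (-1:ℝ)^(2*k+2))) := by
      rw [show 2*(k+1) = (2*k+1)+1 by ring, Finset.prod_Icc_succ_top (by omega),
        show 2*k+1 = (2*k)+1 from rfl, Finset.prod_Icc_succ_top (by omega)]
      ring
    have e2 : (∏ i ∈ Icc (c+1) (c+(k+1)), (q^(4*i) - (1:ℝ))) =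
        (∏ i ∈ Icc (c+1) (c+k), (q^(4*i) - (1:ℝ))) * (q^(4*(c+k+1)) - 1) := by
      rw [show c+(k+1) = (c+k)+1 from rfl, Finset.prod_Icc_succ_top (by omega)]
    rw [e1, e2]
    have hodd : ((-1:ℝ))^(2*k+1) = -1 := Odd.neg_one_pow ⟨k, by ring⟩
    have heven : ((-1:ℝ))^(2*k+2) = 1 := Even.neg_one_pow ⟨k+1, by ring⟩
    rw [hodd, heven]
    have hfact : (q^(2*k+1) - (-1)) * (q^(2*k+2) - 1) < q^(4*(c+k+1)) - 1 := by
      have := core2 q hq k (4*(c+k+1)) (by omega)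
      calc (q^(2*k+1) - (-1)) * (q^(2*k+2) - 1) = (q^(2*k+1) + 1) * (q^(2*k+2) - 1) := by ring
      _ < q^(4*(c+k+1)) - 1 := this
    apply mul_lt_mul'' ih hfact (gprod_nonneg q hq 1 (2*k) le_rfl)
    have h1 : (0:ℝ) < q^(2*k+1) - (-1) := by
      have := gpos q hq (i := 2*k+1) (by omega); rwa [hodd] at this
    have h2 : (0:ℝ) < q^(2*k+2) - 1 := by
      have := gpos q hq (i := 2*k+2) (by omega); rwa [heven] at this
    positivity

/-- Key lemma for odd `m`: `A(c) < ∏_{j=n+1}^{n+2c} (q^j - (-1)^j)` for odd `n`, `c ≥ 1`. -/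
private lemma oddKey (q : ℝ) (hq : 2 ≤ q) (n : ℕ) (hn : Odd n) (c : ℕ) (hc : 1 ≤ c) :
    (∏ i ∈ Icc 1 c, (q^(4*i) - 1)) < ∏ i ∈ Icc (n+1) (n+2*c), (q^i - (-1:ℝ)^i) := by
  obtain ⟨t, ht⟩ := hn
  have hn1 : 1 ≤ n := by omega
  induction c, hc using Nat.le_induction with
  | base =>
    have e1 : (∏ i ∈ Icc 1 1, (q^(4*i) - (1:ℝ))) = q^(4*1) - 1 := by
      rw [Finset.Icc_self, Finset.prod_singleton]
    have e2 : (∏ i ∈ Icc (n+1) (n+2*1), (q^i - (-1:ℝ)^i)) =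
        (q^(n+1) - (-1:ℝ)^(n+1)) * (q^(n+2) - (-1:ℝ)^(n+2)) := by
      rw [show n+2*1 = (n+1)+1 from rfl, Finset.prod_Icc_succ_top (by omega),
        Finset.Icc_self, Finset.prod_singleton]
    have hev : ((-1:ℝ))^(n+1) = 1 := Even.neg_one_pow ⟨t+1, by omega⟩
    have hod : ((-1:ℝ))^(n+2) = -1 := Odd.neg_one_pow ⟨t+1, by omega⟩
    rw [e1, e2, hev, hod]
    have := core1 q hq 1 (n+1) (n+2) le_rfl (by omega) (by omega)
    calc q^(4*1) - 1 < (q^(n+1) - 1) * (q^(n+2) + 1) := this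
    _ = (q^(n+1) - 1) * (q^(n+2) - (-1)) := by ring
  | succ c hc ih =>
    have e1 : (∏ i ∈ Icc 1 (c+1), (q^(4*i) - (1:ℝ))) =
        (∏ i ∈ Icc 1 c, (q^(4*i) - (1:ℝ))) * (q^(4*(c+1)) - 1) := by
      rw [Finset.prod_Icc_succ_top (by omega)]
    have e2 : (∏ i ∈ Icc (n+1) (n+2*(c+1)), (q^i - (-1:ℝ)^i)) =
        (∏ i ∈ Icc (n+1) (n+2*c), (q^i - (-1:ℝ)^i)) *
          ((q^(n+2*c+1) - (-1:ℝ)^(n+2*c+1)) * (q^(n+2*c+2) - (-1:ℝ)^(n+2*c+2))) := by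
      rw [show n+2*(c+1) = (n+2*c+1)+1 by ring, Finset.prod_Icc_succ_top (by omega),
        show n+2*c+1 = (n+2*c)+1 from rfl, Finset.prod_Icc_succ_top (by omega)]
      ring
    rw [e1, e2]
    have hev : ((-1:ℝ))^(n+2*c+1) = 1 := Even.neg_one_pow ⟨t+c+1, by omega⟩
    have hod : ((-1:ℝ))^(n+2*c+2) = -1 := Odd.neg_one_pow ⟨t+c+1, by omega⟩
    rw [hev, hod]
    have hfact : q^(4*(c+1)) - 1 < (q^(n+2*c+1) - 1) * (q^(n+2*c+2) - (-1)) := by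
      have := core1 q hq (c+1) (n+2*c+1) (n+2*c+2) (by omega) (by omega) (by omega)
      calc q^(4*(c+1)) - 1 < (q^(n+2*c+1) - 1) * (q^(n+2*c+2) + 1) := this
      _ = (q^(n+2*c+1) - 1) * (q^(n+2*c+2) - (-1)) := by ring
    apply mul_lt_mul'' ih hfact (fprod_nonneg q hq 1 c le_rfl)
    exact le_of_lt (fpos q hq (i := c+1) (by omega))

/-- `κ(m, c) = ∏_{i=1}^{c} (q^{4i} − 1) · ∏_{i=1}^{m−2c} (q^i − (−1)^i)`
(empty products equal 1). -/
noncomputable def kappaPoly (q : ℝ) (m c : ℕ) : ℝ :=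
  (∏ i ∈ Finset.Icc 1 c, (q ^ (4 * i) - 1)) *
    ∏ i ∈ Finset.Icc 1 (m - 2 * c), (q ^ i - (-1 : ℝ) ^ i)

/-- for a real number `q ≥ 2` and an integer `m ≥ 1`,
`κ(m, ·)` attains its maximum precisely at `c = 0` when `m` is odd and
precisely at `c = m/2` when `m` is even. -/
theorem kappa_max (q : ℝ) (hq : 2 ≤ q) (m : ℕ) (hm : 1 ≤ m) :
    (Odd m → ∀ c : ℕ, 1 ≤ c → c ≤ m / 2 → kappaPoly q m c < kappaPoly q m 0) ∧
    (Even m → ∀ c : ℕ, c < m / 2 → kappaPoly q m c < kappaPoly q m (m / 2)) := by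
  constructor
  · intro hodd c hc1 hc2
    have hmod : m % 2 = 1 := Nat.odd_iff.mp hodd
    set n := m - 2*c with hn
    have h2c : 2*c ≤ m := by omega
    have hn1 : 1 ≤ n := by omega
    have hnm : n + 2*c = m := by omega
    have hnodd : Odd n := by
      obtain ⟨t, ht⟩ := hodd
      exact ⟨t - c, by omega⟩
    unfold kappaPoly
    simp only [Nat.mul_zero, Nat.sub_zero, Finset.Icc_eq_empty_of_lt (by omega : (1:ℕ) > 0),
      Finset.prod_empty, one_mul]
    -- split B(m) = B(n) * ∏_{Icc (n+1) m}
    have hsplit : (∏ i ∈ Icc 1 m, (q^i - (-1:ℝ)^i)) =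
        (∏ i ∈ Icc 1 n, (q^i - (-1:ℝ)^i)) * ∏ i ∈ Icc (n+1) (n+2*c), (q^i - (-1:ℝ)^i) := by
      rw [show Icc 1 m = Ioc 0 m from Finset.Icc_add_one_left_eq_Ioc 0 m, show Icc 1 n = Ioc 0 n from Finset.Icc_add_one_left_eq_Ioc 0 n, Finset.Icc_add_one_left_eq_Ioc n (n+2*c),
        Finset.prod_Ioc_consecutive _ (Nat.zero_le n) (by omega : n ≤ n+2*c), hnm]
    rw [hsplit]
    have hB : (0:ℝ) < ∏ i ∈ Icc 1 n, (q^i - (-1:ℝ)^i) := by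
      apply Finset.prod_pos
      intro i hi
      exact gpos q hq (Finset.mem_Icc.mp hi).1
    calc (∏ i ∈ Icc 1 c, (q^(4*i) - 1)) * ∏ i ∈ Icc 1 n, (q^i - (-1:ℝ)^i)
        = (∏ i ∈ Icc 1 n, (q^i - (-1:ℝ)^i)) * ∏ i ∈ Icc 1 c, (q^(4*i) - 1) := by ring
    _ < (∏ i ∈ Icc 1 n, (q^i - (-1:ℝ)^i)) * ∏ i ∈ Icc (n+1) (n+2*c), (q^i - (-1:ℝ)^i) :=
        mul_lt_mul_of_pos_left (oddKey q hq n hnodd c hc1) hB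
  · intro heven c hc
    have hmod : m % 2 = 0 := Nat.even_iff.mp heven
    set k := m/2 - c with hk
    have hk1 : 1 ≤ k := by omega
    have hck : c + k = m/2 := by omega
    have hmc : m - 2*c = 2*k := by omega
    have hm2 : m - 2*(m/2) = 0 := by omega
    unfold kappaPoly
    rw [hmc, hm2]
    simp only [Finset.Icc_eq_empty_of_lt (by omega : (1:ℕ) > 0), Finset.prod_empty, mul_one]
    have hsplit : (∏ i ∈ Icc 1 (m/2), (q^(4*i) - (1:ℝ))) =
        (∏ i ∈ Icc 1 c, (q^(4*i) - (1:ℝ))) * ∏ i ∈ Icc (c+1) (c+k), (q^(4*i) - (1:ℝ)) := by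
      rw [show Icc 1 (m/2) = Ioc 0 (m/2) from Finset.Icc_add_one_left_eq_Ioc 0 (m/2), show Icc 1 c = Ioc 0 c from Finset.Icc_add_one_left_eq_Ioc 0 c, Finset.Icc_add_one_left_eq_Ioc c (c+k),
        Finset.prod_Ioc_consecutive _ (Nat.zero_le c) (by omega : c ≤ c+k), hck]
    rw [hsplit]
    have hA : (0:ℝ) < ∏ i ∈ Icc 1 c, (q^(4*i) - (1:ℝ)) := by
      apply Finset.prod_pos
      intro i hi
      exact fpos q hq (Finset.mem_Icc.mp hi).1
    exact mul_lt_mul_of_pos_left (evenKey q hq k hk1 c) hA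
end

section
/- Let M = M⁰ ⊕ M¹ with M⁰, M¹ free W-modules of rank 2, equipped with F, V, Π as in conditions (i)–(ii). Suppose M has Lie type (2,0), i.e., dim_k M⁰/V(M¹) = 2 and V(M⁰) = M¹. Then: V(M¹) = p·M⁰, F(M⁰) = M¹, F(M¹) = p·M⁰, Π(M⁰) = M¹, Π(M¹) = p·M⁰, the module M/(F(M) + V(M)) has k-dimension 2 and is concentrated in the summand indexed by 0, and V²(M) = p·M, so M is a superspecial Dieudonné module. -/
open Pointwise

variable (p : ℕ) [Fact p.Prime] (k : Type) [Field k] [IsAlgClosed k] [CharP k p]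

/-- The Frobenius automorphism `σ` of `W = W(k)`. -/
noncomputable def sigW : WittVector p k →+* WittVector p k :=
  (WittVector.frobeniusEquiv p k : WittVector p k ≃+* WittVector p k)

/-- The inverse `σ⁻¹` of the Frobenius automorphism of `W = W(k)`. -/
noncomputable def sigWinv : WittVector p k →+* WittVector p k :=
  ((WittVector.frobeniusEquiv p k).symm : WittVector p k ≃+* WittVector p k)

/-- Auxiliary: if `v = c • e + d • y` with `c` a unit, then `e ∈ span {v, y}`. -/
lemma aux_mem_span_pair {R N : Type*} [CommRing R] [AddCommGroup N] [Module R N]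
    (v e y : N) (c d : R) (hc : IsUnit c) (hv : v = c • e + d • y) :
    e ∈ Submodule.span R ({v, y} : Set N) := by
  obtain ⟨u, rfl⟩ := hc
  have he : e = (↑u⁻¹ : R) • (v - d • y) := by
    rw [hv]
    have h2 : (u : R) • e + d • y - d • y = (u : R) • e := by abel
    rw [h2, smul_smul, u.inv_mul, one_smul]
  rw [he]
  exact Submodule.smul_mem _ _ (Submodule.sub_mem _
    (Submodule.subset_span (Set.mem_insert _ _))
    (Submodule.smul_mem _ _ (Submodule.subset_span (Set.mem_insert_of_mem _ rfl))))

/-- let `M = M⁰ ⊕ M¹` with `M⁰, M¹` free `W`-modules of rank 2,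
equipped with `F, V, Π` as in conditions (i)–(ii).  Suppose `M` has Lie type
`(2,0)`, i.e. `dim_k M⁰/V(M¹) = 2` (expressed below: `M⁰` needs exactly two
generators over `W` modulo `V(M¹)`) and `V(M⁰) = M¹`.  Then `V(M¹) = p·M⁰`,
`F(M⁰) = M¹`, `F(M¹) = p·M⁰`, `Π(M⁰) = M¹`, `Π(M¹) = p·M⁰`, the module
`M/(F(M) + V(M))` has `k`-dimension 2 and is concentrated in the summand
indexed by `0` (i.e. `F(M) + V(M) = M¹ + p·M⁰`, which needs exactly two
generators from `M⁰` to fill up `M`), and `V²(M) = p·M`, so `M` is a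
superspecial Dieudonné module. -/
theorem lie_type_two_zero_superspecial
    (M : Type) [AddCommGroup M] [Module (WittVector p k) M]
    (M0 M1 : Submodule (WittVector p k) M) (compl : IsCompl M0 M1)
    (free0 : Nonempty (Module.Basis (Fin 2) (WittVector p k) ↥M0))
    (free1 : Nonempty (Module.Basis (Fin 2) (WittVector p k) ↥M1))
    (Fr : M →ₛₗ[sigW p k] M) (Vr : M →ₛₗ[sigWinv p k] M)
    (Fr01 : ∀ x ∈ M0, Fr x ∈ M1) (Fr10 : ∀ x ∈ M1, Fr x ∈ M0)
    (Vr01 : ∀ x ∈ M0, Vr x ∈ M1) (Vr10 : ∀ x ∈ M1, Vr x ∈ M0)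
    (FV : ∀ x : M, Fr (Vr x) = (p : WittVector p k) • x)
    (VF : ∀ x : M, Vr (Fr x) = (p : WittVector p k) • x)
    (Pi : M →ₗ[WittVector p k] M)
    (Pi01 : ∀ x ∈ M0, Pi x ∈ M1) (Pi10 : ∀ x ∈ M1, Pi x ∈ M0)
    (PiSq : ∀ x : M, Pi (Pi x) = -((p : WittVector p k) • x))
    (FrPi : ∀ x : M, Fr (Pi x) = Pi (Fr x))
    -- Lie type (2,0): `dim_k M⁰/V(M¹) = 2` …
    (hdim2 :
      (∃ x y : M, x ∈ M0 ∧ y ∈ M0 ∧ ∀ z ∈ M0,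
          z ∈ Submodule.span (WittVector p k) (⇑Vr '' (M1 : Set M)) ⊔
            Submodule.span (WittVector p k) {x, y}) ∧
      ¬ ∃ x : M, x ∈ M0 ∧ ∀ z ∈ M0,
          z ∈ Submodule.span (WittVector p k) (⇑Vr '' (M1 : Set M)) ⊔
            Submodule.span (WittVector p k) {x})
    -- … and `V(M⁰) = M¹`:
    (hVM0 : ⇑Vr '' (M0 : Set M) = (M1 : Set M)) :
    -- V(M¹) = p·M⁰
    (⇑Vr '' (M1 : Set M) = (fun x : M => (p : WittVector p k) • x) '' (M0 : Set M)) ∧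
    -- F(M⁰) = M¹ and F(M¹) = p·M⁰
    (⇑Fr '' (M0 : Set M) = (M1 : Set M)) ∧
    (⇑Fr '' (M1 : Set M) = (fun x : M => (p : WittVector p k) • x) '' (M0 : Set M)) ∧
    -- Π(M⁰) = M¹ and Π(M¹) = p·M⁰
    (⇑Pi '' (M0 : Set M) = (M1 : Set M)) ∧
    (⇑Pi '' (M1 : Set M) = (fun x : M => (p : WittVector p k) • x) '' (M0 : Set M)) ∧
    -- F(M) + V(M) = M¹ + p·M⁰, so M/(F,V)M is concentrated in the summand 0 …
    (Submodule.span (WittVector p k) (⇑Fr '' Set.univ ∪ ⇑Vr '' Set.univ) =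
      M1 ⊔ (p : WittVector p k) • M0) ∧
    -- … and has k-dimension 2:
    ((∃ x y : M, x ∈ M0 ∧ y ∈ M0 ∧
        Submodule.span (WittVector p k) (⇑Fr '' Set.univ ∪ ⇑Vr '' Set.univ) ⊔
          Submodule.span (WittVector p k) {x, y} = ⊤) ∧
      ¬ ∃ x : M,
        Submodule.span (WittVector p k) (⇑Fr '' Set.univ ∪ ⇑Vr '' Set.univ) ⊔
          Submodule.span (WittVector p k) {x} = ⊤) ∧
    -- V²(M) = p·M, i.e. M is superspecial:
    ((fun x : M => Vr (Vr x)) '' Set.univ =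
      (fun x : M => (p : WittVector p k) • x) '' Set.univ) := by
  obtain ⟨b0⟩ := free0
  obtain ⟨b1⟩ := free1
  -- basic facts about `p` in `W`
  have hirr : Irreducible (p : WittVector p k) := WittVector.irreducible p
  have hpu : ¬ IsUnit (p : WittVector p k) := hirr.not_isUnit
  have hp0 : (p : WittVector p k) ≠ 0 := hirr.ne_zero
  have hdvd : ∀ c : WittVector p k, ¬ IsUnit c → (p : WittVector p k) ∣ c := by
    intro c hc
    rcases eq_or_ne c 0 with rfl | h0
    · exact dvd_zero _
    · obtain ⟨m, u, hu⟩ := WittVector.exists_eq_pow_p_mul' c h0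
      cases m with
      | zero => exact absurd (by rw [hu, pow_zero, one_mul]; exact u.isUnit) hc
      | succ m => exact ⟨(p : WittVector p k) ^ m * u, by rw [hu, pow_succ]; ring⟩
  -- expressing elements of a rank-2 submodule via a basis
  have hrepr : ∀ (N : Submodule (WittVector p k) M) (b : Module.Basis (Fin 2) (WittVector p k) ↥N)
      (z : M) (hz : z ∈ N), z = b.repr ⟨z, hz⟩ 0 • (b 0 : M) + b.repr ⟨z, hz⟩ 1 • (b 1 : M) := by
    intro N b z hz
    have h := b.sum_repr ⟨z, hz⟩
    rw [Fin.sum_univ_two] at h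
    have h2 := congrArg (Subtype.val) h
    simpa using h2.symm
  -- torsion-freeness of submodules with a finite basis
  have torsub : ∀ (N : Submodule (WittVector p k) M) (b : Module.Basis (Fin 2) (WittVector p k) ↥N)
      (x : M), x ∈ N → (p : WittVector p k) • x = 0 → x = 0 := by
    intro N b x hx hpx
    have h0 : (p : WittVector p k) • (⟨x, hx⟩ : ↥N) = 0 := by
      apply Subtype.ext; simpa using hpx
    rcases b.smul_eq_zero.mp h0 with h | h
    · exact absurd h hp0
    · simpa using congrArg Subtype.val h
  -- decomposition of M
  have decomp : ∀ m : M, ∃ a ∈ M0, ∃ b ∈ M1, m = a + b := by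
    intro m
    have hm : m ∈ M0 ⊔ M1 := by rw [compl.sup_eq_top]; trivial
    rcases Submodule.mem_sup.mp hm with ⟨a, ha, b, hb, h⟩
    exact ⟨a, ha, b, hb, h.symm⟩
  have hinf : M0 ⊓ M1 = ⊥ := compl.inf_eq_bot
  have mem_bot : ∀ x : M, x ∈ M0 → x ∈ M1 → x = 0 := by
    intro x h0 h1
    have hx : x ∈ M0 ⊓ M1 := ⟨h0, h1⟩
    rw [hinf] at hx
    simpa using hx
  -- torsion-freeness of M
  have tor : ∀ x : M, (p : WittVector p k) • x = 0 → x = 0 := by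
    intro x hx
    obtain ⟨a, ha, b, hb, rfl⟩ := decomp x
    rw [smul_add] at hx
    have hab : (p : WittVector p k) • a = -((p : WittVector p k) • b) := by
      rw [eq_neg_iff_add_eq_zero]; exact hx
    have hpa : (p : WittVector p k) • a = 0 :=
      mem_bot _ (M0.smul_mem _ ha) (hab ▸ M1.neg_mem (M1.smul_mem _ hb))
    have ha0 : a = 0 := torsub M0 b0 a ha hpa
    have hb0 : b = 0 := torsub M1 b1 b hb (by rw [hpa, zero_add] at hx; exact hx)
    rw [ha0, hb0, add_zero]
  -- injectivity of the three operators
  have Vinj : Function.Injective Vr := by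
    intro x y h
    have h1 : Vr (x - y) = 0 := by rw [map_sub, h, sub_self]
    have h2 : (p : WittVector p k) • (x - y) = 0 := by rw [← FV, h1, map_zero]
    have h3 := tor _ h2
    rwa [sub_eq_zero] at h3
  have Finj : Function.Injective Fr := by
    intro x y h
    have h1 : Fr (x - y) = 0 := by rw [map_sub, h, sub_self]
    have h2 : (p : WittVector p k) • (x - y) = 0 := by rw [← VF, h1, map_zero]
    have h3 := tor _ h2
    rwa [sub_eq_zero] at h3
  have Piinj : Function.Injective Pi := by
    intro x y h
    have h1 : Pi (x - y) = 0 := by rw [map_sub, h, sub_self]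
    have h2 : (p : WittVector p k) • (x - y) = 0 := by
      have h3 := PiSq (x - y)
      rw [h1, map_zero] at h3
      simpa using h3.symm
    have h3 := tor _ h2
    rwa [sub_eq_zero] at h3
  -- semilinear maps commute with scalar multiplication by p
  have Vsmulp : ∀ x : M, Vr ((p : WittVector p k) • x) = (p : WittVector p k) • Vr x := by
    intro x
    rw [LinearMap.map_smulₛₗ, map_natCast]
  -- Π commutes with V
  have PiV : ∀ x : M, Pi (Vr x) = Vr (Pi x) := by
    intro x
    apply Finj
    rw [FrPi, FV, FV, map_smul]
  -- set versus submodule for p • M0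
  have pM0setdef : (fun x : M => (p : WittVector p k) • x) '' (M0 : Set M)
      = ((p : WittVector p k) • M0 : Submodule (WittVector p k) M) := by
    rw [Submodule.coe_pointwise_smul, Set.image_smul]
  have mem_pM0 : ∀ x : M, x ∈ (p : WittVector p k) • M0 ↔
      ∃ z ∈ M0, (p : WittVector p k) • z = x := by
    intro x
    exact Set.mem_smul_set
  -- the hard inclusion: span (V '' M1) ≤ p • M0
  have hNle : Submodule.span (WittVector p k) (⇑Vr '' (M1 : Set M)) ≤
      (p : WittVector p k) • M0 := by
    by_contra hle
    obtain ⟨v, hvN, hvp⟩ := SetLike.not_le_iff_exists.mp hle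
    have hNM0 : Submodule.span (WittVector p k) (⇑Vr '' (M1 : Set M)) ≤ M0 := by
      rw [Submodule.span_le]
      rintro _ ⟨z, hz, rfl⟩
      exact Vr10 z hz
    have hvM0 : v ∈ M0 := hNM0 hvN
    set c0 : WittVector p k := b0.repr ⟨v, hvM0⟩ 0 with hc0
    set c1 : WittVector p k := b0.repr ⟨v, hvM0⟩ 1 with hc1
    have hv : v = c0 • (b0 0 : M) + c1 • (b0 1 : M) := hrepr M0 b0 v hvM0
    have hnotboth : ¬ ((p : WittVector p k) ∣ c0 ∧ (p : WittVector p k) ∣ c1) := by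
      rintro ⟨⟨d0, hd0⟩, ⟨d1, hd1⟩⟩
      apply hvp
      rw [mem_pM0]
      refine ⟨d0 • (b0 0 : M) + d1 • (b0 1 : M),
        M0.add_mem (M0.smul_mem _ (b0 0).2) (M0.smul_mem _ (b0 1).2), ?_⟩
      rw [hv, hd0, hd1, smul_add, smul_smul, smul_smul]
    have hunit : IsUnit c0 ∨ IsUnit c1 := by
      by_contra h
      push_neg at h
      exact hnotboth ⟨hdvd c0 h.1, hdvd c1 h.2⟩
    apply hdim2.2
    rcases hunit with hu | hu
    · refine ⟨(b0 1 : M), (b0 1).2, fun z hz => ?_⟩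
      have he0 : (b0 0 : M) ∈ Submodule.span (WittVector p k) ({v, (b0 1 : M)} : Set M) :=
        aux_mem_span_pair v (b0 0 : M) (b0 1 : M) c0 c1 hu hv
      have he1 : (b0 1 : M) ∈ Submodule.span (WittVector p k) ({v, (b0 1 : M)} : Set M) :=
        Submodule.subset_span (Set.mem_insert_of_mem _ rfl)
      have hzmem : z ∈ Submodule.span (WittVector p k) ({v, (b0 1 : M)} : Set M) := by
        rw [hrepr M0 b0 z hz]
        exact Submodule.add_mem _ (Submodule.smul_mem _ _ he0) (Submodule.smul_mem _ _ he1)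
      refine Submodule.span_le.mpr ?_ hzmem
      rintro w hw
      rcases hw with rfl | hw
      · exact Submodule.mem_sup_left hvN
      · rcases hw with rfl
        exact Submodule.mem_sup_right (Submodule.subset_span rfl)
    · refine ⟨(b0 0 : M), (b0 0).2, fun z hz => ?_⟩
      have hv' : v = c1 • (b0 1 : M) + c0 • (b0 0 : M) := by rw [hv, add_comm]
      have he1 : (b0 1 : M) ∈ Submodule.span (WittVector p k) ({v, (b0 0 : M)} : Set M) :=
        aux_mem_span_pair v (b0 1 : M) (b0 0 : M) c1 c0 hu hv'
      have he0 : (b0 0 : M) ∈ Submodule.span (WittVector p k) ({v, (b0 0 : M)} : Set M) :=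
        Submodule.subset_span (Set.mem_insert_of_mem _ rfl)
      have hzmem : z ∈ Submodule.span (WittVector p k) ({v, (b0 0 : M)} : Set M) := by
        rw [hrepr M0 b0 z hz]
        exact Submodule.add_mem _ (Submodule.smul_mem _ _ he0) (Submodule.smul_mem _ _ he1)
      refine Submodule.span_le.mpr ?_ hzmem
      rintro w hw
      rcases hw with rfl | hw
      · exact Submodule.mem_sup_left hvN
      · rcases hw with rfl
        exact Submodule.mem_sup_right (Submodule.subset_span rfl)
  -- conclusion (1): V(M1) = p M0 as sets
  have concl1 : ⇑Vr '' (M1 : Set M)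
      = (fun x : M => (p : WittVector p k) • x) '' (M0 : Set M) := by
    apply Set.Subset.antisymm
    · intro w hw
      have h1 : w ∈ Submodule.span (WittVector p k) (⇑Vr '' (M1 : Set M)) :=
        Submodule.subset_span hw
      have h2 := hNle h1
      rw [pM0setdef]
      exact h2
    · rintro _ ⟨x, hx, rfl⟩
      exact ⟨Fr x, Fr01 x hx, VF x⟩
  -- conclusion (2): F(M0) = M1
  have concl2 : ⇑Fr '' (M0 : Set M) = (M1 : Set M) := by
    apply Set.Subset.antisymm
    · rintro _ ⟨x, hx, rfl⟩
      exact Fr01 x hx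
    · intro y hy
      have hVy : Vr y ∈ ⇑Vr '' (M1 : Set M) := ⟨y, hy, rfl⟩
      rw [concl1] at hVy
      obtain ⟨x, hx, hxy⟩ := hVy
      refine ⟨x, hx, Vinj ?_⟩
      rw [VF]
      first
      | exact hxy
      | exact hxy.symm
  -- conclusion (3): F(M1) = p M0
  have concl3 : ⇑Fr '' (M1 : Set M)
      = (fun x : M => (p : WittVector p k) • x) '' (M0 : Set M) := by
    apply Set.Subset.antisymm
    · rintro _ ⟨y, hy, rfl⟩
      have hy2 : y ∈ ⇑Vr '' (M0 : Set M) := by rw [hVM0]; exact hy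
      obtain ⟨x, hx, rfl⟩ := hy2
      refine ⟨x, hx, ?_⟩
      first
      | exact FV x
      | exact (FV x).symm
    · rintro _ ⟨x, hx, rfl⟩
      refine ⟨Vr x, Vr01 x hx, ?_⟩
      first
      | exact FV x
      | exact (FV x).symm
  -- conclusion (5): Π(M1) = p M0
  have concl5 : ⇑Pi '' (M1 : Set M)
      = (fun x : M => (p : WittVector p k) • x) '' (M0 : Set M) := by
    apply Set.Subset.antisymm
    · rintro _ ⟨y, hy, rfl⟩
      have hy2 : y ∈ ⇑Vr '' (M0 : Set M) := by rw [hVM0]; exact hy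
      obtain ⟨x, hx, rfl⟩ := hy2
      rw [PiV]
      have h1 : Vr (Pi x) ∈ ⇑Vr '' (M1 : Set M) := ⟨Pi x, Pi01 x hx, rfl⟩
      rw [concl1] at h1
      exact h1
    · rintro _ ⟨x, hx, rfl⟩
      refine ⟨-(Pi x), M1.neg_mem (Pi01 x hx), ?_⟩
      rw [map_neg, PiSq, neg_neg]
  -- conclusion (4): Π(M0) = M1
  have concl4 : ⇑Pi '' (M0 : Set M) = (M1 : Set M) := by
    apply Set.Subset.antisymm
    · rintro _ ⟨x, hx, rfl⟩
      exact Pi01 x hx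
    · intro y hy
      have hPy : Pi y ∈ ⇑Pi '' (M1 : Set M) := ⟨y, hy, rfl⟩
      rw [concl5] at hPy
      obtain ⟨x, hx, hxy⟩ := hPy
      refine ⟨-x, M0.neg_mem hx, Piinj ?_⟩
      rw [PiSq, smul_neg, neg_neg]
      first
      | exact hxy
      | exact hxy.symm
  -- conclusion (6): F(M) + V(M) = M1 ⊔ p M0
  have concl6 : Submodule.span (WittVector p k) (⇑Fr '' Set.univ ∪ ⇑Vr '' Set.univ) =
      M1 ⊔ (p : WittVector p k) • M0 := by
    apply le_antisymm
    · rw [Submodule.span_le]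
      rintro _ (⟨m, -, rfl⟩ | ⟨m, -, rfl⟩)
      · obtain ⟨a, ha, b, hb, rfl⟩ := decomp m
        rw [map_add]
        refine Submodule.add_mem _ (Submodule.mem_sup_left (Fr01 a ha)) ?_
        have h1 : Fr b ∈ ⇑Fr '' (M1 : Set M) := ⟨b, hb, rfl⟩
        rw [concl3, pM0setdef] at h1
        exact Submodule.mem_sup_right h1
      · obtain ⟨a, ha, b, hb, rfl⟩ := decomp m
        rw [map_add]
        refine Submodule.add_mem _ (Submodule.mem_sup_left (Vr01 a ha)) ?_
        have h1 : Vr b ∈ ⇑Vr '' (M1 : Set M) := ⟨b, hb, rfl⟩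
        rw [concl1, pM0setdef] at h1
        exact Submodule.mem_sup_right h1
    · apply sup_le
      · intro y hy
        have h1 : y ∈ ⇑Fr '' (M0 : Set M) := by rw [concl2]; exact hy
        obtain ⟨x, hx, rfl⟩ := h1
        exact Submodule.subset_span (Or.inl ⟨x, trivial, rfl⟩)
      · intro y hy
        obtain ⟨z, hz, rfl⟩ := (mem_pM0 y).mp hy
        have h1 : (p : WittVector p k) • z = Vr (Fr z) := (VF z).symm
        rw [h1]
        exact Submodule.subset_span (Or.inr ⟨Fr z, trivial, rfl⟩)
  -- conclusion (7): the quotient has dimension exactly 2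
  have concl7a : ∃ x y : M, x ∈ M0 ∧ y ∈ M0 ∧
      Submodule.span (WittVector p k) (⇑Fr '' Set.univ ∪ ⇑Vr '' Set.univ) ⊔
        Submodule.span (WittVector p k) {x, y} = ⊤ := by
    refine ⟨(b0 0 : M), (b0 1 : M), (b0 0).2, (b0 1).2, ?_⟩
    rw [concl6, eq_top_iff]
    intro z _
    obtain ⟨a, ha, b, hb, rfl⟩ := decomp z
    refine Submodule.add_mem _ ?_ ?_
    · apply Submodule.mem_sup_right
      rw [hrepr M0 b0 a ha]
      exact Submodule.add_mem _
        (Submodule.smul_mem _ _ (Submodule.subset_span (Set.mem_insert _ _)))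
        (Submodule.smul_mem _ _ (Submodule.subset_span (Set.mem_insert_of_mem _ rfl)))
    · exact Submodule.mem_sup_left (Submodule.mem_sup_left hb)
  have concl7b : ¬ ∃ x : M,
      Submodule.span (WittVector p k) (⇑Fr '' Set.univ ∪ ⇑Vr '' Set.univ) ⊔
        Submodule.span (WittVector p k) {x} = ⊤ := by
    rintro ⟨x, hx⟩
    rw [concl6] at hx
    obtain ⟨x0, hx0, x1, hx1, rfl⟩ := decomp x
    -- every element of M0 is p • m + t • x0
    have key : ∀ z : M, z ∈ M0 → ∃ m ∈ M0, ∃ t : WittVector p k,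
        z = (p : WittVector p k) • m + t • x0 := by
      intro z hz
      have hz2 : z ∈ M1 ⊔ (p : WittVector p k) • M0 ⊔
          Submodule.span (WittVector p k) {x0 + x1} := by rw [hx]; trivial
      obtain ⟨w, hw, s, hs, hzws⟩ := Submodule.mem_sup.mp hz2
      obtain ⟨w1, hw1, w0, hw0, hww⟩ := Submodule.mem_sup.mp hw
      obtain ⟨t, rfl⟩ := Submodule.mem_span_singleton.mp hs
      obtain ⟨m, hm, hpm⟩ := (mem_pM0 w0).mp hw0
      -- z = w1 + p•m + t•x0 + t•x1
      have hdec : z - ((p : WittVector p k) • m + t • x0) = w1 + t • x1 := by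
        rw [← hzws, ← hww, ← hpm, smul_add]
        abel
      have h01 : z - ((p : WittVector p k) • m + t • x0) = 0 := by
        apply mem_bot
        · exact M0.sub_mem hz (M0.add_mem (M0.smul_mem _ hm) (M0.smul_mem _ hx0))
        · rw [hdec]
          exact M1.add_mem hw1 (M1.smul_mem _ hx1)
      refine ⟨m, hm, t, ?_⟩
      rw [← sub_eq_zero]
      exact h01
    -- apply to the two basis vectors of M0 and extract coordinates
    obtain ⟨m, hm, t, hmt⟩ := key (b0 0 : M) (b0 0).2
    obtain ⟨m', hm', s, hms⟩ := key (b0 1 : M) (b0 1).2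
    -- coordinates of x0
    set g0 : WittVector p k := b0.repr ⟨x0, hx0⟩ 0 with hg0
    set g1 : WittVector p k := b0.repr ⟨x0, hx0⟩ 1 with hg1
    have hx0r : x0 = g0 • (b0 0 : M) + g1 • (b0 1 : M) := hrepr M0 b0 x0 hx0
    set a0 : WittVector p k := b0.repr ⟨m, hm⟩ 0 with ha0
    set a1 : WittVector p k := b0.repr ⟨m, hm⟩ 1 with ha1
    have hmr : m = a0 • (b0 0 : M) + a1 • (b0 1 : M) := hrepr M0 b0 m hm
    set e0 : WittVector p k := b0.repr ⟨m', hm'⟩ 0 with he0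
    set e1 : WittVector p k := b0.repr ⟨m', hm'⟩ 1 with he1
    have hmr' : m' = e0 • (b0 0 : M) + e1 • (b0 1 : M) := hrepr M0 b0 m' hm'
    -- rewrite the identities in terms of the basis of ↥M0
    have hb00 : (b0 0 : M) = ((p : WittVector p k) * a0 + t * g0) • (b0 0 : M)
        + ((p : WittVector p k) * a1 + t * g1) • (b0 1 : M) := by
      calc (b0 0 : M) = (p : WittVector p k) • m + t • x0 := hmt
      _ = _ := by rw [hmr, hx0r]; simp only [smul_add, smul_smul, add_smul]; abel
    have hb01 : (b0 1 : M) = ((p : WittVector p k) * e0 + s * g0) • (b0 0 : M)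
        + ((p : WittVector p k) * e1 + s * g1) • (b0 1 : M) := by
      calc (b0 1 : M) = (p : WittVector p k) • m' + s • x0 := hms
      _ = _ := by rw [hmr', hx0r]; simp only [smul_add, smul_smul, add_smul]; abel
    -- uniqueness of coordinates
    have coordeq : ∀ (z : ↥M0) (r0 r1 : WittVector p k),
        (z : M) = r0 • (b0 0 : M) + r1 • (b0 1 : M) →
        b0.repr z 0 = r0 ∧ b0.repr z 1 = r1 := by
      intro z r0 r1 hzr
      have hz' : z = r0 • b0 0 + r1 • b0 1 := by
        apply Subtype.ext
        simpa using hzr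
      rw [hz']
      constructor <;> simp [Finsupp.single_apply]
    have h1 := coordeq (b0 0) _ _ hb00
    have h2 := coordeq (b0 1) _ _ hb01
    simp only [Module.Basis.repr_self, Finsupp.single_eq_same, Finsupp.single_apply] at h1 h2
    -- extract the four scalar equations
    have e11 : (p : WittVector p k) * a0 + t * g0 = 1 := by
      simpa using h1.1.symm
    have e12 : (p : WittVector p k) * a1 + t * g1 = 0 := by
      simpa using h1.2.symm
    have e21 : (p : WittVector p k) * e0 + s * g0 = 0 := by
      simpa using h2.1.symm
    have e22 : (p : WittVector p k) * e1 + s * g1 = 1 := by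
      simpa using h2.2.symm
    -- derive that p is a unit, contradiction
    have m1 : ((p : WittVector p k) * a0 + t * g0) * ((p : WittVector p k) * e1 + s * g1)
        = 1 := by rw [e11, e22, one_mul]
    have m2 : ((p : WittVector p k) * a1 + t * g1) * ((p : WittVector p k) * e0 + s * g0)
        = 0 := by rw [e12, e21, mul_zero]
    have hfin : (p : WittVector p k) *
        ((p : WittVector p k) * a0 * e1 + a0 * s * g1 + t * g0 * e1
          - (p : WittVector p k) * a1 * e0 - a1 * s * g0 - t * g1 * e0) = 1 := by
      linear_combination m1 - m2
    exact hpu (IsUnit.of_mul_eq_one _ hfin)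
  -- conclusion (8): V² M = p M
  have concl8 : (fun x : M => Vr (Vr x)) '' Set.univ
      = (fun x : M => (p : WittVector p k) • x) '' Set.univ := by
    apply Set.Subset.antisymm
    · rintro _ ⟨m, -, rfl⟩
      obtain ⟨a, ha, b, hb, rfl⟩ := decomp m
      have h1 : Vr (Vr a) ∈ ⇑Vr '' (M1 : Set M) := ⟨Vr a, Vr01 a ha, rfl⟩
      rw [concl1] at h1
      obtain ⟨u, hu, huu⟩ := h1
      have h2 : Vr b ∈ ⇑Vr '' (M1 : Set M) := ⟨b, hb, rfl⟩
      rw [concl1] at h2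
      obtain ⟨w, hw, hww⟩ := h2
      have huu' : (p : WittVector p k) • u = Vr (Vr a) := huu
      have hww' : (p : WittVector p k) • w = Vr b := hww
      refine ⟨u + Vr w, trivial, ?_⟩
      have key : (p : WittVector p k) • (u + Vr w) = Vr (Vr (a + b)) := by
        rw [map_add, map_add, smul_add, huu', ← Vsmulp, hww']
      first
      | exact key
      | exact key.symm
    · rintro _ ⟨m, -, rfl⟩
      obtain ⟨a, ha, b, hb, rfl⟩ := decomp m
      -- p • a = V(V w) for some w, since F a ∈ M1 = V(M0)
      have h1 : Fr a ∈ ⇑Vr '' (M0 : Set M) := by rw [hVM0]; exact Fr01 a ha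
      obtain ⟨w, hw, hww⟩ := h1
      -- p • b = V(F b) and F b ∈ p M0 = V(M1)
      have h2 : Fr b ∈ ⇑Vr '' (M1 : Set M) := by
        rw [concl1]
        have h3 : Fr b ∈ ⇑Fr '' (M1 : Set M) := ⟨b, hb, rfl⟩
        rw [concl3] at h3
        exact h3
      obtain ⟨u, hu, huu⟩ := h2
      refine ⟨w + u, trivial, ?_⟩
      have key : Vr (Vr (w + u)) = (p : WittVector p k) • (a + b) := by
        rw [map_add, map_add, hww, huu, VF, VF, smul_add]
      first
      | exact key
      | exact key.symm
  exact ⟨concl1, concl2, concl3, concl4, concl5, concl6, ⟨concl7a, concl7b⟩, concl8⟩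
end
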